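/- arXiv:1509.06218 — 4 statements merged into one kernel-verified Lean document; each statement's English description precedes it below -/
import Mathlib

section
/- Let the hydrostatic Navier–Stokes system with free surface hold as in the context. Then for all (x,t) the energy balance holds: ∂/∂t ∫_{z_b}^{η} E dz + ∂/∂x ∫_{z_b}^{η} [ u( E + g(η−z) − (Σ_xx − Σ_zz) − ∂/∂x ∫_z^η Σ_zx dz₁ ) − w Σ_zx ] dz = − ∫_{z_b}^{η} ( ∂_x u (Σ_xx − Σ_zz) + ∂_z u Σ_xz + ∂_x w Σ_zx ) dz − (κ/c_b³) u_b², where E = u²/2 + g z. -/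
open MeasureTheory Set intervalIntegral Metric

noncomputable def pd1 (f : ℝ → ℝ → ℝ) (x z : ℝ) : ℝ := deriv (fun x' => f x' z) x
noncomputable def pd2 (f : ℝ → ℝ → ℝ) (x z : ℝ) : ℝ := deriv (fun z' => f x z') z

lemma one_le_itop : ((⊤ : ℕ∞) : WithTop ℕ∞) ≠ 0 := by
  simp

/-- ∂/∂x of a function of (x,z,t). -/
noncomputable def dX (f : ℝ → ℝ → ℝ → ℝ) (x z t : ℝ) : ℝ := deriv (fun x' => f x' z t) x

/-- ∂/∂z of a function of (x,z,t). -/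
noncomputable def dZ (f : ℝ → ℝ → ℝ → ℝ) (x z t : ℝ) : ℝ := deriv (fun z' => f x z' t) z

/-- ∂/∂t of a function of (x,z,t). -/
noncomputable def dT (f : ℝ → ℝ → ℝ → ℝ) (x z t : ℝ) : ℝ := deriv (fun t' => f x z t') t

namespace EB

variable {f : ℝ → ℝ → ℝ}

lemma hasDerivAt_pd1 (hf : ContDiff ℝ (⊤ : ℕ∞) (fun q : ℝ × ℝ => f q.1 q.2)) (x z : ℝ) :
    HasDerivAt (fun x' => f x' z) (pd1 f x z) x := by
  have h2 : DifferentiableAt ℝ (fun x' : ℝ => f x' z) x :=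
    (hf.differentiable one_le_itop (x, z)).comp x (f := fun x' : ℝ => (x', z)) (differentiableAt_id.prodMk (differentiableAt_const z))
  exact h2.hasDerivAt

lemma hasDerivAt_pd2 (hf : ContDiff ℝ (⊤ : ℕ∞) (fun q : ℝ × ℝ => f q.1 q.2)) (x z : ℝ) :
    HasDerivAt (fun z' => f x z') (pd2 f x z) z := by
  have h2 : DifferentiableAt ℝ (fun z' : ℝ => f x z') z :=
    (hf.differentiable one_le_itop (x, z)).comp z ((differentiableAt_const x).prodMk differentiableAt_id)
  exact h2.hasDerivAt

lemma pd1_eq (hf : ContDiff ℝ (⊤ : ℕ∞) (fun q : ℝ × ℝ => f q.1 q.2)) (x z : ℝ) :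
    pd1 f x z = fderiv ℝ (fun q : ℝ × ℝ => f q.1 q.2) (x, z) (1, 0) := by
  have hcurve : HasDerivAt (fun x' : ℝ => (x', z)) ((1 : ℝ), (0 : ℝ)) x :=
    (hasDerivAt_id x).prodMk (hasDerivAt_const x z)
  exact ((hf.differentiable one_le_itop (x, z)).hasFDerivAt.comp_hasDerivAt x hcurve).deriv

lemma pd2_eq (hf : ContDiff ℝ (⊤ : ℕ∞) (fun q : ℝ × ℝ => f q.1 q.2)) (x z : ℝ) :
    pd2 f x z = fderiv ℝ (fun q : ℝ × ℝ => f q.1 q.2) (x, z) (0, 1) := by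
  have hcurve : HasDerivAt (fun z' : ℝ => (x, z')) ((0 : ℝ), (1 : ℝ)) z :=
    (hasDerivAt_const z x).prodMk (hasDerivAt_id z)
  exact ((hf.differentiable one_le_itop (x, z)).hasFDerivAt.comp_hasDerivAt z hcurve).deriv

lemma continuous_pd1 (hf : ContDiff ℝ (⊤ : ℕ∞) (fun q : ℝ × ℝ => f q.1 q.2)) :
    Continuous fun q : ℝ × ℝ => pd1 f q.1 q.2 := by
  have : (fun q : ℝ × ℝ => pd1 f q.1 q.2)
      = fun q : ℝ × ℝ => fderiv ℝ (fun q : ℝ × ℝ => f q.1 q.2) q (1, 0) :=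
    funext fun q => pd1_eq hf q.1 q.2
  rw [this]
  exact (hf.continuous_fderiv one_le_itop).clm_apply continuous_const

lemma continuous_pd2 (hf : ContDiff ℝ (⊤ : ℕ∞) (fun q : ℝ × ℝ => f q.1 q.2)) :
    Continuous fun q : ℝ × ℝ => pd2 f q.1 q.2 := by
  have : (fun q : ℝ × ℝ => pd2 f q.1 q.2)
      = fun q : ℝ × ℝ => fderiv ℝ (fun q : ℝ × ℝ => f q.1 q.2) q (0, 1) :=
    funext fun q => pd2_eq hf q.1 q.2
  rw [this]
  exact (hf.continuous_fderiv one_le_itop).clm_apply continuous_const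

lemma hasDerivAt_comp2 (hf : ContDiff ℝ (⊤ : ℕ∞) (fun q : ℝ × ℝ => f q.1 q.2))
    {a b : ℝ → ℝ} {a' b' x : ℝ} (ha : HasDerivAt a a' x) (hb : HasDerivAt b b' x) :
    HasDerivAt (fun y => f (a y) (b y))
      (a' * pd1 f (a x) (b x) + b' * pd2 f (a x) (b x)) x := by
  have h := ((hf.differentiable one_le_itop (a x, b x)).hasFDerivAt).comp_hasDerivAt x (ha.prodMk hb)
  have heq : fderiv ℝ (fun q : ℝ × ℝ => f q.1 q.2) (a x, b x) (a', b')
      = a' * pd1 f (a x) (b x) + b' * pd2 f (a x) (b x) := by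
    rw [pd1_eq hf, pd2_eq hf]
    have : ((a', b') : ℝ × ℝ) = a' • ((1 : ℝ), (0 : ℝ)) + b' • ((0 : ℝ), (1 : ℝ)) := by
      simp [Prod.ext_iff]
    set L := fderiv ℝ (fun q : ℝ × ℝ => f q.1 q.2) (a x, b x) with hL
    rw [this, L.map_add, L.map_smul, L.map_smul, smul_eq_mul, smul_eq_mul]
  rw [heq] at h
  exact h



lemma continuous_snd_curry (hf : ContDiff ℝ (⊤ : ℕ∞) (fun q : ℝ × ℝ => f q.1 q.2)) (y : ℝ) :
    Continuous fun z => f y z :=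
  hf.continuous.comp (continuous_const.prodMk continuous_id)

lemma param_hasDerivAt (F : ℝ → ℝ → ℝ)
    (hF : ContDiff ℝ (⊤ : ℕ∞) (fun q : ℝ × ℝ => F q.1 q.2)) (x : ℝ) :
    HasDerivAt (fun x' => ∫ s in (0:ℝ)..1, F x' s) (∫ s in (0:ℝ)..1, pd1 F x s) x := by
  obtain ⟨C, hC⟩ := ((isCompact_closedBall x 1).prod (isCompact_uIcc (a := (0:ℝ)) (b := 1))).exists_bound_of_continuousOn
      (continuous_pd1 hF).continuousOn
  refine (intervalIntegral.hasDerivAt_integral_of_dominated_loc_of_deriv_le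
      (F := fun x' s => F x' s) (F' := fun x' s => pd1 F x' s) (a := 0) (b := 1) (μ := volume)
      (bound := fun _ => C) (s := ball x 1) (ball_mem_nhds x one_pos) ?_ ?_ ?_ ?_ ?_ ?_).2
  · filter_upwards with x'
    exact (continuous_snd_curry hF x').aestronglyMeasurable
  · exact (continuous_snd_curry hF x).intervalIntegrable 0 1
  · exact ((continuous_pd1 hF).comp (continuous_const.prodMk continuous_id)).aestronglyMeasurable
  · filter_upwards with s hs x' hx'
    exact hC (x', s) ⟨ball_subset_closedBall hx', uIoc_subset_uIcc hs⟩
  · exact intervalIntegrable_const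
  · filter_upwards with s _ x' _
    exact hasDerivAt_pd1 hF x' s

lemma leibniz (f : ℝ → ℝ → ℝ) (hf : ContDiff ℝ (⊤ : ℕ∞) (fun q : ℝ × ℝ => f q.1 q.2))
    (a b : ℝ → ℝ) (ha : ContDiff ℝ (⊤ : ℕ∞) a) (hb : ContDiff ℝ (⊤ : ℕ∞) b) (x : ℝ) :
    HasDerivAt (fun x' => ∫ z in a x'..b x', f x' z)
      ((∫ z in a x..b x, pd1 f x z) + deriv b x * f x (b x) - deriv a x * f x (a x)) x := by
  set FF : ℝ → ℝ → ℝ := fun y s => (b y - a y) * f y (a y + s * (b y - a y)) with hFFdef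
  have hsub : ∀ (y : ℝ) (gg : ℝ → ℝ), Continuous gg →
      ∫ s in (0:ℝ)..1, (b y - a y) * gg (a y + s * (b y - a y)) = ∫ z in a y..b y, gg z := by
    intro y gg hgg
    have h1 : ∀ s ∈ uIcc (0:ℝ) 1, HasDerivAt (fun s' => a y + s' * (b y - a y)) (b y - a y) s := by
      intro s _
      simpa using ((hasDerivAt_id s).mul_const (b y - a y)).const_add (a y)
    have h2 := intervalIntegral.integral_comp_smul_deriv h1 continuousOn_const hgg
    simp only [smul_eq_mul, Function.comp] at h2
    rw [h2]
    norm_num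
  have step1 : ∀ y, ∫ z in a y..b y, f y z = ∫ s in (0:ℝ)..1, FF y s := by
    intro y
    rw [← hsub y (fun z => f y z) (continuous_snd_curry hf y)]
  have hFF : ContDiff ℝ (⊤ : ℕ∞) (fun q : ℝ × ℝ => FF q.1 q.2) := by
    have hb1 : ContDiff ℝ (⊤ : ℕ∞) (fun q : ℝ × ℝ => b q.1 - a q.1) :=
      (hb.comp contDiff_fst).sub (ha.comp contDiff_fst)
    have hinner : ContDiff ℝ (⊤ : ℕ∞) (fun q : ℝ × ℝ => a q.1 + q.2 * (b q.1 - a q.1)) :=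
      (ha.comp contDiff_fst).add (contDiff_snd.mul hb1)
    exact hb1.mul (hf.comp (contDiff_fst.prodMk hinner))
  have hmain := param_hasDerivAt FF hFF x
  have hfun : (fun x' => ∫ z in a x'..b x', f x' z) = fun x' => ∫ s in (0:ℝ)..1, FF x' s :=
    funext step1
  rw [hfun]
  convert hmain using 1
  -- compute ∫ s in 0..1, pd1 FF x s
  have hax : HasDerivAt a (deriv a x) x := (ha.differentiable one_le_itop x).hasDerivAt
  have hbx : HasDerivAt b (deriv b x) x := (hb.differentiable one_le_itop x).hasDerivAt
  set A := a x
  set B := b x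
  set a' := deriv a x
  set b' := deriv b x
  set ℓ : ℝ → ℝ := fun s => A + s * (B - A) with hℓ
  have hpdFF : ∀ s : ℝ, pd1 FF x s
      = ((b' - a') * f x (ℓ s) + (a' + s * (b' - a')) * pd2 f x (ℓ s) * (B - A))
        + (B - A) * pd1 f x (ℓ s) := by
    intro s
    have h1 : HasDerivAt (fun y => b y - a y) (b' - a') x := hbx.sub hax
    have h2 : HasDerivAt (fun y => a y + s * (b y - a y)) (a' + s * (b' - a')) x :=
      hax.add (h1.const_mul s)
    have h3 : HasDerivAt (fun y => f y (a y + s * (b y - a y)))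
        (1 * pd1 f x (ℓ s) + (a' + s * (b' - a')) * pd2 f x (ℓ s)) x :=
      hasDerivAt_comp2 hf (hasDerivAt_id x) h2
    have h4 := h1.mul h3
    have := h4.deriv
    rw [show pd1 FF x s = deriv (fun y => FF y s) x from rfl]
    rw [show (fun y => FF y s) = ((fun y => b y - a y) * fun y => f y (a y + s * (b y - a y))) from rfl, this]
    ring
  have hcont_pd2ℓ : Continuous fun s => pd2 f x (ℓ s) :=
    (continuous_pd2 hf).comp (continuous_const.prodMk (by fun_prop))
  have hcont_pd1ℓ : Continuous fun s => pd1 f x (ℓ s) :=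
    (continuous_pd1 hf).comp (continuous_const.prodMk (by fun_prop))
  have hcont_fℓ : Continuous fun s => f x (ℓ s) :=
    (continuous_snd_curry hf x).comp (by fun_prop)
  have hcont_big : Continuous fun s => (b' - a') * f x (ℓ s) + (a' + s * (b' - a')) * pd2 f x (ℓ s) * (B - A) :=
    (continuous_const.mul hcont_fℓ).add
      (((continuous_const.add (continuous_id.mul continuous_const)).mul hcont_pd2ℓ).mul continuous_const)
  have hsplit : ∫ s in (0:ℝ)..1, pd1 FF x s
      = (∫ s in (0:ℝ)..1, ((b' - a') * f x (ℓ s) + (a' + s * (b' - a')) * pd2 f x (ℓ s) * (B - A)))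
        + ∫ s in (0:ℝ)..1, (B - A) * pd1 f x (ℓ s) := by
    rw [← intervalIntegral.integral_add]
    · exact intervalIntegral.integral_congr fun s _ => hpdFF s
    · exact hcont_big.intervalIntegrable 0 1
    · exact (continuous_const.mul hcont_pd1ℓ).intervalIntegrable 0 1
  have hI2 : ∫ s in (0:ℝ)..1, (B - A) * pd1 f x (ℓ s) = ∫ z in A..B, pd1 f x z := by
    have := hsub x (fun z => pd1 f x z) ((continuous_pd1 hf).comp (continuous_const.prodMk continuous_id))
    simpa using this
  have hI1 : ∫ s in (0:ℝ)..1, ((b' - a') * f x (ℓ s) + (a' + s * (b' - a')) * pd2 f x (ℓ s) * (B - A))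
      = b' * f x B - a' * f x A := by
    have hφ : ∀ s ∈ uIcc (0:ℝ) 1, HasDerivAt (fun s' => (a' + s' * (b' - a')) * f x (ℓ s'))
        ((b' - a') * f x (ℓ s) + (a' + s * (b' - a')) * pd2 f x (ℓ s) * (B - A)) s := by
      intro s _
      have hlin : HasDerivAt (fun s' : ℝ => a' + s' * (b' - a')) (b' - a') s := by
        simpa using ((hasDerivAt_id s).mul_const (b' - a')).const_add a'
      have hℓd : HasDerivAt ℓ (B - A) s := by
        have h := ((hasDerivAt_id s).mul_const (B - A)).const_add A
        rw [one_mul] at h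
        exact h
      have hfc : HasDerivAt (fun s' => f x (ℓ s'))
          (0 * pd1 f x (ℓ s) + (B - A) * pd2 f x (ℓ s)) s :=
        hasDerivAt_comp2 hf (hasDerivAt_const s x) hℓd
      have := hlin.mul hfc
      refine this.congr_deriv ?_
      beta_reduce
      ring
    have hFTC := intervalIntegral.integral_eq_sub_of_hasDerivAt hφ
      (hcont_big.intervalIntegrable 0 1)
    rw [hFTC]
    have e1 : ℓ 1 = B := by simp [hℓ]
    have e0 : ℓ 0 = A := by simp [hℓ]
    rw [e1, e0]
    ring
  rw [hsplit, hI1, hI2]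
  ring


variable {f3 : ℝ → ℝ → ℝ → ℝ}




lemma hasDerivAt_dX (hf : ContDiff ℝ (⊤ : ℕ∞) (fun q : ℝ × ℝ × ℝ => f3 q.1 q.2.1 q.2.2))
    (x z t : ℝ) : HasDerivAt (fun x' => f3 x' z t) (dX f3 x z t) x :=
  ((hf.differentiable one_le_itop (x, (z, t))).comp x (f := fun x' : ℝ => (x', (z, t)))
    (differentiableAt_id.prodMk (differentiableAt_const (z, t)))).hasDerivAt

lemma hasDerivAt_dZ (hf : ContDiff ℝ (⊤ : ℕ∞) (fun q : ℝ × ℝ × ℝ => f3 q.1 q.2.1 q.2.2))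
    (x z t : ℝ) : HasDerivAt (fun z' => f3 x z' t) (dZ f3 x z t) z :=
  ((hf.differentiable one_le_itop (x, (z, t))).comp z (f := fun z' : ℝ => (x, (z', t)))
    ((differentiableAt_const x).prodMk (differentiableAt_id.prodMk (differentiableAt_const t)))).hasDerivAt

lemma hasDerivAt_dT (hf : ContDiff ℝ (⊤ : ℕ∞) (fun q : ℝ × ℝ × ℝ => f3 q.1 q.2.1 q.2.2))
    (x z t : ℝ) : HasDerivAt (fun t' => f3 x z t') (dT f3 x z t) t :=
  ((hf.differentiable one_le_itop (x, (z, t))).comp t (f := fun t' : ℝ => (x, (z, t')))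
    ((differentiableAt_const x).prodMk ((differentiableAt_const z).prodMk differentiableAt_id))).hasDerivAt

lemma dX_eq_fderiv (hf : ContDiff ℝ (⊤ : ℕ∞) (fun q : ℝ × ℝ × ℝ => f3 q.1 q.2.1 q.2.2))
    (x z t : ℝ) : dX f3 x z t
      = fderiv ℝ (fun q : ℝ × ℝ × ℝ => f3 q.1 q.2.1 q.2.2) (x, (z, t)) (1, (0, 0)) := by
  have hcurve : HasDerivAt (fun x' : ℝ => ((x', (z, t)) : ℝ × ℝ × ℝ)) ((1 : ℝ), ((0 : ℝ), (0 : ℝ))) x :=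
    (hasDerivAt_id x).prodMk ((hasDerivAt_const x z).prodMk (hasDerivAt_const x t))
  exact ((hf.differentiable one_le_itop (x, (z, t))).hasFDerivAt.comp_hasDerivAt x hcurve).deriv

lemma dZ_eq_fderiv (hf : ContDiff ℝ (⊤ : ℕ∞) (fun q : ℝ × ℝ × ℝ => f3 q.1 q.2.1 q.2.2))
    (x z t : ℝ) : dZ f3 x z t
      = fderiv ℝ (fun q : ℝ × ℝ × ℝ => f3 q.1 q.2.1 q.2.2) (x, (z, t)) (0, (1, 0)) := by
  have hcurve : HasDerivAt (fun z' : ℝ => ((x, (z', t)) : ℝ × ℝ × ℝ)) ((0 : ℝ), ((1 : ℝ), (0 : ℝ))) z :=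
    (hasDerivAt_const z x).prodMk ((hasDerivAt_id z).prodMk (hasDerivAt_const z t))
  exact ((hf.differentiable one_le_itop (x, (z, t))).hasFDerivAt.comp_hasDerivAt z hcurve).deriv

lemma dT_eq_fderiv (hf : ContDiff ℝ (⊤ : ℕ∞) (fun q : ℝ × ℝ × ℝ => f3 q.1 q.2.1 q.2.2))
    (x z t : ℝ) : dT f3 x z t
      = fderiv ℝ (fun q : ℝ × ℝ × ℝ => f3 q.1 q.2.1 q.2.2) (x, (z, t)) (0, (0, 1)) := by
  have hcurve : HasDerivAt (fun t' : ℝ => ((x, (z, t')) : ℝ × ℝ × ℝ)) ((0 : ℝ), ((0 : ℝ), (1 : ℝ))) t :=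
    (hasDerivAt_const t x).prodMk ((hasDerivAt_const t z).prodMk (hasDerivAt_id t))
  exact ((hf.differentiable one_le_itop (x, (z, t))).hasFDerivAt.comp_hasDerivAt t hcurve).deriv

lemma continuous_dX_z (hf : ContDiff ℝ (⊤ : ℕ∞) (fun q : ℝ × ℝ × ℝ => f3 q.1 q.2.1 q.2.2))
    (x t : ℝ) : Continuous fun z => dX f3 x z t := by
  have : (fun z => dX f3 x z t) = fun z =>
      fderiv ℝ (fun q : ℝ × ℝ × ℝ => f3 q.1 q.2.1 q.2.2) (x, (z, t)) (1, (0, 0)) :=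
    funext fun z => dX_eq_fderiv hf x z t
  rw [this]
  exact (((hf.continuous_fderiv one_le_itop).comp
    (by fun_prop : Continuous fun z : ℝ => ((x, (z, t)) : ℝ × ℝ × ℝ)))).clm_apply continuous_const

lemma continuous_dZ_z (hf : ContDiff ℝ (⊤ : ℕ∞) (fun q : ℝ × ℝ × ℝ => f3 q.1 q.2.1 q.2.2))
    (x t : ℝ) : Continuous fun z => dZ f3 x z t := by
  have : (fun z => dZ f3 x z t) = fun z =>
      fderiv ℝ (fun q : ℝ × ℝ × ℝ => f3 q.1 q.2.1 q.2.2) (x, (z, t)) (0, (1, 0)) :=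
    funext fun z => dZ_eq_fderiv hf x z t
  rw [this]
  exact (((hf.continuous_fderiv one_le_itop).comp
    (by fun_prop : Continuous fun z : ℝ => ((x, (z, t)) : ℝ × ℝ × ℝ)))).clm_apply continuous_const

lemma continuous_dT_z (hf : ContDiff ℝ (⊤ : ℕ∞) (fun q : ℝ × ℝ × ℝ => f3 q.1 q.2.1 q.2.2))
    (x t : ℝ) : Continuous fun z => dT f3 x z t := by
  have : (fun z => dT f3 x z t) = fun z =>
      fderiv ℝ (fun q : ℝ × ℝ × ℝ => f3 q.1 q.2.1 q.2.2) (x, (z, t)) (0, (0, 1)) :=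
    funext fun z => dT_eq_fderiv hf x z t
  rw [this]
  exact (((hf.continuous_fderiv one_le_itop).comp
    (by fun_prop : Continuous fun z : ℝ => ((x, (z, t)) : ℝ × ℝ × ℝ)))).clm_apply continuous_const

lemma continuous_z (hf : ContDiff ℝ (⊤ : ℕ∞) (fun q : ℝ × ℝ × ℝ => f3 q.1 q.2.1 q.2.2))
    (x t : ℝ) : Continuous fun z => f3 x z t :=
  hf.continuous.comp (by fun_prop : Continuous fun z : ℝ => ((x, (z, t)) : ℝ × ℝ × ℝ))


end EB

/-- energy balance for the free-surface hydrostatic Navier–Stokes system: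
`∂_t ∫ E + ∂_x ∫ [u(E + g(η−z) − (Σxx − Σzz) − ∂_x ∫_z^η Σzx) − w Σzx]
  = −∫ (∂_x u (Σxx−Σzz) + ∂_z u Σxz + ∂_x w Σzx) − (κ/c_b³) u_b²`, `E = u²/2 + gz`. -/
theorem stmt0 (g κ : ℝ) (hg : 0 < g) (hκ : 0 ≤ κ)
    (zb : ℝ → ℝ) (H : ℝ → ℝ → ℝ)
    (hzb : ContDiff ℝ (⊤ : ℕ∞) zb)
    (hH : ContDiff ℝ (⊤ : ℕ∞) (fun q : ℝ × ℝ => H q.1 q.2))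
    (hHpos : ∀ x t : ℝ, 0 < H x t)
    (η : ℝ → ℝ → ℝ) (hη : ∀ x t : ℝ, η x t = zb x + H x t)
    (u w p Sxx Sxz Szx Szz : ℝ → ℝ → ℝ → ℝ)
    (hu : ContDiff ℝ (⊤ : ℕ∞) (fun q : ℝ × ℝ × ℝ => u q.1 q.2.1 q.2.2))
    (hw : ContDiff ℝ (⊤ : ℕ∞) (fun q : ℝ × ℝ × ℝ => w q.1 q.2.1 q.2.2))
    (hp : ContDiff ℝ (⊤ : ℕ∞) (fun q : ℝ × ℝ × ℝ => p q.1 q.2.1 q.2.2))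
    (hSxx : ContDiff ℝ (⊤ : ℕ∞) (fun q : ℝ × ℝ × ℝ => Sxx q.1 q.2.1 q.2.2))
    (hSxz : ContDiff ℝ (⊤ : ℕ∞) (fun q : ℝ × ℝ × ℝ => Sxz q.1 q.2.1 q.2.2))
    (hSzx : ContDiff ℝ (⊤ : ℕ∞) (fun q : ℝ × ℝ × ℝ => Szx q.1 q.2.1 q.2.2))
    (hSzz : ContDiff ℝ (⊤ : ℕ∞) (fun q : ℝ × ℝ × ℝ => Szz q.1 q.2.1 q.2.2))
    -- incompressibility
    (hincomp : ∀ x t : ℝ, ∀ z ∈ Set.Icc (zb x) (η x t),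
      dX u x z t + dZ w x z t = 0)
    -- horizontal momentum
    (hmom : ∀ x t : ℝ, ∀ z ∈ Set.Icc (zb x) (η x t),
      dT u x z t + dX (fun x' z' t' => (u x' z' t') ^ 2) x z t
        + dZ (fun x' z' t' => u x' z' t' * w x' z' t') x z t + dX p x z t
      = dX Sxx x z t + dZ Sxz x z t)
    -- hydrostatic vertical balance
    (hhyd : ∀ x t : ℝ, ∀ z ∈ Set.Icc (zb x) (η x t),
      dZ p x z t = -g + dX Szx x z t + dZ Szz x z t)
    -- kinematic boundary conditions
    (hkin_s : ∀ x t : ℝ,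
      deriv (fun t' => η x t') t
        + u x (η x t) t * deriv (fun x' => η x' t) x - w x (η x t) t = 0)
    (hkin_b : ∀ x t : ℝ, u x (zb x) t * deriv zb x - w x (zb x) t = 0)
    -- dynamic boundary condition at the free surface: (−pI + Σ) n_s = 0
    (hdyn_s : ∀ x t : ℝ,
      ((-(p x (η x t) t) + Sxx x (η x t) t) * (-(deriv (fun x' => η x' t) x))
          + Sxz x (η x t) t) / Real.sqrt (1 + (deriv (fun x' => η x' t) x) ^ 2) = 0
      ∧ (Szx x (η x t) t * (-(deriv (fun x' => η x' t) x))
          + (-(p x (η x t) t) + Szz x (η x t) t))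
          / Real.sqrt (1 + (deriv (fun x' => η x' t) x) ^ 2) = 0)
    -- friction boundary condition at the bottom: t_b · (−pI + Σ) n_b = (κ/c_b) u_b
    (cb sb : ℝ → ℝ)
    (hcb : ∀ x : ℝ, cb x = 1 / Real.sqrt (1 + (deriv zb x) ^ 2))
    (hsb : ∀ x : ℝ, sb x = cb x * deriv zb x)
    (hdyn_b : ∀ x t : ℝ,
      cb x * ((-(p x (zb x) t) + Sxx x (zb x) t) * (-(sb x)) + Sxz x (zb x) t * cb x)
        + sb x * (Szx x (zb x) t * (-(sb x)) + (-(p x (zb x) t) + Szz x (zb x) t) * cb x)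
      = (κ / cb x) * u x (zb x) t) :
    ∀ x t : ℝ,
      deriv (fun t' => ∫ z in (zb x)..(η x t'), ((u x z t') ^ 2 / 2 + g * z)) t
        + deriv (fun x' => ∫ z in (zb x')..(η x' t),
            (u x' z t * (((u x' z t) ^ 2 / 2 + g * z) + g * (η x' t - z)
                - (Sxx x' z t - Szz x' z t)
                - deriv (fun x'' => ∫ z₁ in z..(η x'' t), Szx x'' z₁ t) x')
              - w x' z t * Szx x' z t)) x
      = -(∫ z in (zb x)..(η x t),
            (dX u x z t * (Sxx x z t - Szz x z t) + dZ u x z t * Sxz x z t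
              + dX w x z t * Szx x z t))
        - κ / (cb x) ^ 3 * (u x (zb x) t) ^ 2 := by
  intro x t
  -- ====== basic facts ======
  have hle : ∀ x' t' : ℝ, zb x' ≤ η x' t' := fun x' t' => by
    rw [hη]; nlinarith [hHpos x' t']
  have hη2 : ContDiff ℝ (⊤ : ℕ∞) (fun q : ℝ × ℝ => η q.1 q.2) := by
    have hfe : (fun q : ℝ × ℝ => η q.1 q.2) = fun q : ℝ × ℝ => zb q.1 + H q.1 q.2 :=
      funext fun q => hη q.1 q.2
    rw [hfe]; exact (hzb.comp contDiff_fst).add hH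
  have hηx : ContDiff ℝ (⊤ : ℕ∞) (fun x' => η x' t) :=
    hη2.comp (contDiff_id.prodMk contDiff_const)
  have hηtc : ContDiff ℝ (⊤ : ℕ∞) (fun t' => η x t') :=
    hη2.comp (contDiff_const.prodMk contDiff_id)
  have fr : ∀ {f : ℝ → ℝ → ℝ → ℝ}, ContDiff ℝ (⊤ : ℕ∞) (fun q : ℝ × ℝ × ℝ => f q.1 q.2.1 q.2.2) →
      ContDiff ℝ (⊤ : ℕ∞) (fun q : ℝ × ℝ => f q.1 q.2 t) := fun hf =>
    hf.comp (contDiff_fst.prodMk (contDiff_snd.prodMk contDiff_const))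
  -- ====== pressure reconstruction ======
  have hpress : ∀ x' z : ℝ, z ∈ Set.Icc (zb x') (η x' t) →
      p x' z t = Szz x' z t + g * (η x' t - z)
        - deriv (fun x'' => ∫ z₁ in z..(η x'' t), Szx x'' z₁ t) x' := by
    intro x' z hz
    obtain ⟨hz1, hz2⟩ := hz
    have hQ : deriv (fun x'' => ∫ z₁ in z..(η x'' t), Szx x'' z₁ t) x'
        = (∫ z₁ in z..η x' t, dX Szx x' z₁ t)
          + deriv (fun y => η y t) x' * Szx x' (η x' t) t
          - deriv (fun _ : ℝ => z) x' * Szx x' z t :=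
      (EB.leibniz (fun y z₁ => Szx y z₁ t) (fr hSzx) (fun _ => z) (fun y => η y t)
        contDiff_const hηx x').deriv
    rw [deriv_const] at hQ
    have hFTCp : ∫ z₁ in z..η x' t, dZ p x' z₁ t = p x' (η x' t) t - p x' z t :=
      intervalIntegral.integral_eq_sub_of_hasDerivAt
        (fun z₁ _ => EB.hasDerivAt_dZ hp x' z₁ t)
        ((EB.continuous_dZ_z hp x' t).intervalIntegrable _ _)
    have hFTCszz : ∫ z₁ in z..η x' t, dZ Szz x' z₁ t = Szz x' (η x' t) t - Szz x' z t :=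
      intervalIntegral.integral_eq_sub_of_hasDerivAt
        (fun z₁ _ => EB.hasDerivAt_dZ hSzz x' z₁ t)
        ((EB.continuous_dZ_z hSzz x' t).intervalIntegrable _ _)
    have hcongr : ∫ z₁ in z..η x' t, dZ p x' z₁ t
        = ∫ z₁ in z..η x' t, (-g + dX Szx x' z₁ t + dZ Szz x' z₁ t) := by
      apply intervalIntegral.integral_congr
      intro z₁ hz₁
      rw [Set.uIcc_of_le hz2] at hz₁
      exact hhyd x' t z₁ ⟨le_trans hz1 hz₁.1, hz₁.2⟩
    have hsplit : ∫ z₁ in z..η x' t, (-g + dX Szx x' z₁ t + dZ Szz x' z₁ t)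
        = ((η x' t - z) * (-g) + (∫ z₁ in z..η x' t, dX Szx x' z₁ t))
          + (Szz x' (η x' t) t - Szz x' z t) := by
      rw [intervalIntegral.integral_add, intervalIntegral.integral_add,
        intervalIntegral.integral_const, hFTCszz, smul_eq_mul]
      · exact intervalIntegrable_const
      · exact (EB.continuous_dX_z hSzx x' t).intervalIntegrable _ _
      · exact (intervalIntegrable_const.add ((EB.continuous_dX_z hSzx x' t).intervalIntegrable _ _))
      · exact (EB.continuous_dZ_z hSzz x' t).intervalIntegrable _ _
    have hA : p x' (η x' t) t - p x' z t
        = ((η x' t - z) * (-g) + (∫ z₁ in z..η x' t, dX Szx x' z₁ t))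
          + (Szz x' (η x' t) t - Szz x' z t) := hFTCp.symm.trans (hcongr.trans hsplit)
    have hsq : Real.sqrt (1 + (deriv (fun x'' => η x'' t) x') ^ 2) ≠ 0 :=
      ne_of_gt (Real.sqrt_pos.2 (by positivity))
    have hnum2 : Szx x' (η x' t) t * (-(deriv (fun x'' => η x'' t) x'))
        + (-(p x' (η x' t) t) + Szz x' (η x' t) t) = 0 :=
      (div_eq_zero_iff.mp (hdyn_s x' t).2).resolve_right hsq
    linear_combination (-1 : ℝ) * hA + hQ + (-1 : ℝ) * hnum2
  -- ====== rewrite the x-flux integrand using the pressure formula ======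
  have hswap : (fun x' => ∫ z in (zb x')..(η x' t),
        (u x' z t * (((u x' z t) ^ 2 / 2 + g * z) + g * (η x' t - z)
            - (Sxx x' z t - Szz x' z t)
            - deriv (fun x'' => ∫ z₁ in z..(η x'' t), Szx x'' z₁ t) x')
          - w x' z t * Szx x' z t))
      = fun x' => ∫ z in (zb x')..(η x' t),
          (u x' z t * (u x' z t ^ 2 / 2 + g * z + p x' z t - Sxx x' z t)
            - w x' z t * Szx x' z t) := by
    funext x'
    apply intervalIntegral.integral_congr
    intro z hz
    rw [Set.uIcc_of_le (hle x' t)] at hz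
    have hp' := hpress x' z hz
    linear_combination (-(u x' z t)) * hp'
  -- ====== Leibniz in t ======
  have hA : HasDerivAt (fun t' => ∫ z in (zb x)..(η x t'), ((u x z t') ^ 2 / 2 + g * z))
      ((∫ z in zb x..η x t, pd1 (fun t' z => (u x z t') ^ 2 / 2 + g * z) t z)
        + deriv (fun t' => η x t') t * ((u x (η x t) t) ^ 2 / 2 + g * η x t)
        - deriv (fun _ : ℝ => zb x) t * ((u x (zb x) t) ^ 2 / 2 + g * zb x)) t := by
    have hu2 : ContDiff ℝ (⊤ : ℕ∞) (fun q : ℝ × ℝ => u x q.2 q.1) :=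
      hu.comp (contDiff_const.prodMk (contDiff_snd.prodMk contDiff_fst))
    have hfE : ContDiff ℝ (⊤ : ℕ∞) (fun q : ℝ × ℝ => (u x q.2 q.1) ^ 2 / 2 + g * q.2) :=
      ((hu2.pow 2).div_const 2).add (contDiff_const.mul contDiff_snd)
    exact EB.leibniz (fun t' z => (u x z t') ^ 2 / 2 + g * z) hfE
      (fun _ => zb x) (fun t' => η x t') contDiff_const hηtc t
  -- ====== Leibniz in x ======
  have hB : HasDerivAt (fun x' => ∫ z in (zb x')..(η x' t),
        (u x' z t * (u x' z t ^ 2 / 2 + g * z + p x' z t - Sxx x' z t)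
          - w x' z t * Szx x' z t))
      ((∫ z in zb x..η x t,
          pd1 (fun y z => u y z t * (u y z t ^ 2 / 2 + g * z + p y z t - Sxx y z t)
            - w y z t * Szx y z t) x z)
        + deriv (fun x' => η x' t) x
            * (u x (η x t) t * (u x (η x t) t ^ 2 / 2 + g * η x t + p x (η x t) t
                - Sxx x (η x t) t) - w x (η x t) t * Szx x (η x t) t)
        - deriv zb x
            * (u x (zb x) t * (u x (zb x) t ^ 2 / 2 + g * zb x + p x (zb x) t
                - Sxx x (zb x) t) - w x (zb x) t * Szx x (zb x) t)) x := by
    have hf2c : ContDiff ℝ (⊤ : ℕ∞) (fun q : ℝ × ℝ =>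
        u q.1 q.2 t * (u q.1 q.2 t ^ 2 / 2 + g * q.2 + p q.1 q.2 t - Sxx q.1 q.2 t)
          - w q.1 q.2 t * Szx q.1 q.2 t) :=
      ((fr hu).mul (((((fr hu).pow 2).div_const 2).add
          (contDiff_const.mul contDiff_snd)).add (fr hp) |>.sub (fr hSxx))).sub
        ((fr hw).mul (fr hSzx))
    exact EB.leibniz (fun y z => u y z t * (u y z t ^ 2 / 2 + g * z + p y z t - Sxx y z t)
        - w y z t * Szx y z t) hf2c zb (fun x' => η x' t) hzb hηx x
  -- ====== pointwise conversions of the integrands ======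
  have hIEeq : ∀ z : ℝ, pd1 (fun t' z => (u x z t') ^ 2 / 2 + g * z) t z
      = u x z t * dT u x z t := by
    intro z
    have h : pd1 (fun t' z => (u x z t') ^ 2 / 2 + g * z) t z = _ :=
      ((((EB.hasDerivAt_dT hu x z t).pow 2).div_const 2).add_const (g * z)).deriv
    rw [h]; push_cast; ring
  have hEXPR : ∀ z : ℝ, pd1 (fun y z => u y z t * (u y z t ^ 2 / 2 + g * z + p y z t
        - Sxx y z t) - w y z t * Szx y z t) x z
      = dX u x z t * (u x z t ^ 2 / 2 + g * z + p x z t - Sxx x z t)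
        + u x z t * (u x z t * dX u x z t + dX p x z t - dX Sxx x z t)
        - (dX w x z t * Szx x z t + w x z t * dX Szx x z t) := by
    intro z
    have hu' := EB.hasDerivAt_dX hu x z t
    have hp' := EB.hasDerivAt_dX hp x z t
    have hsxx' := EB.hasDerivAt_dX hSxx x z t
    have hw' := EB.hasDerivAt_dX hw x z t
    have hszx' := EB.hasDerivAt_dX hSzx x z t
    have h : pd1 (fun y z => u y z t * (u y z t ^ 2 / 2 + g * z + p y z t
          - Sxx y z t) - w y z t * Szx y z t) x z = _ :=
      ((hu'.mul ((((hu'.pow 2).div_const 2).add_const (g * z)).add hp' |>.sub hsxx')).sub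
        (hw'.mul hszx')).deriv
    rw [h]; simp only [Pi.add_apply, Pi.sub_apply, Pi.pow_apply, Pi.mul_apply]; push_cast; ring
  -- ====== the vertical-flux function and its z-derivative ======
  have hG3deriv : ∀ z : ℝ, HasDerivAt
      (fun z' => w x z' t * (u x z' t ^ 2 / 2 + g * z') + w x z' t * p x z' t
        - u x z' t * Sxz x z' t - w x z' t * Szz x z' t)
      (dZ w x z t * (u x z t ^ 2 / 2 + g * z) + w x z t * (u x z t * dZ u x z t + g)
        + (dZ w x z t * p x z t + w x z t * dZ p x z t)
        - (dZ u x z t * Sxz x z t + u x z t * dZ Sxz x z t)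
        - (dZ w x z t * Szz x z t + w x z t * dZ Szz x z t)) z := by
    intro z
    have hu' := EB.hasDerivAt_dZ hu x z t
    have hw' := EB.hasDerivAt_dZ hw x z t
    have hp' := EB.hasDerivAt_dZ hp x z t
    have hsxz' := EB.hasDerivAt_dZ hSxz x z t
    have hszz' := EB.hasDerivAt_dZ hSzz x z t
    have hgz : HasDerivAt (fun z' : ℝ => g * z') g z := by
      simpa using (hasDerivAt_id z).const_mul g
    have h := (((hw'.mul (((hu'.pow 2).div_const 2).add hgz)).add (hw'.mul hp')).sub
        (hu'.mul hsxz')).sub (hw'.mul hszz')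
    refine h.congr_deriv ?_
    simp only [Pi.add_apply, Pi.sub_apply, Pi.pow_apply, Pi.mul_apply]; push_cast; ring
  -- ====== continuity facts ======
  have cu := EB.continuous_z hu x t
  have cw := EB.continuous_z hw x t
  have cp := EB.continuous_z hp x t
  have csxx := EB.continuous_z hSxx x t
  have csxz := EB.continuous_z hSxz x t
  have cszx := EB.continuous_z hSzx x t
  have cszz := EB.continuous_z hSzz x t
  have cdxu := EB.continuous_dX_z hu x t
  have cdxw := EB.continuous_dX_z hw x t
  have cdxp := EB.continuous_dX_z hp x t
  have cdxsxx := EB.continuous_dX_z hSxx x t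
  have cdxszx := EB.continuous_dX_z hSzx x t
  have cdzu := EB.continuous_dZ_z hu x t
  have cdzw := EB.continuous_dZ_z hw x t
  have cdzp := EB.continuous_dZ_z hp x t
  have cdzsxz := EB.continuous_dZ_z hSxz x t
  have cdzszz := EB.continuous_dZ_z hSzz x t
  have cdtu := EB.continuous_dT_z hu x t
  have cgz : Continuous fun z : ℝ => g * z := continuous_const.mul continuous_id
  have cE : Continuous fun z : ℝ => u x z t ^ 2 / 2 + g * z := ((cu.pow 2).div_const 2).add cgz
  have hi1 : IntervalIntegrable (fun z => u x z t * dT u x z t) volume (zb x) (η x t) :=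
    (cu.mul cdtu).intervalIntegrable _ _
  have hi2 : IntervalIntegrable (fun z =>
      dX u x z t * (u x z t ^ 2 / 2 + g * z + p x z t - Sxx x z t)
        + u x z t * (u x z t * dX u x z t + dX p x z t - dX Sxx x z t)
        - (dX w x z t * Szx x z t + w x z t * dX Szx x z t)) volume (zb x) (η x t) :=
    (((cdxu.mul ((cE.add cp).sub csxx)).add
        (cu.mul (((cu.mul cdxu).add cdxp).sub cdxsxx))).sub
      ((cdxw.mul cszx).add (cw.mul cdxszx))).intervalIntegrable _ _
  have hiD : IntervalIntegrable (fun z =>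
      dX u x z t * (Sxx x z t - Szz x z t) + dZ u x z t * Sxz x z t
        + dX w x z t * Szx x z t) volume (zb x) (η x t) :=
    (((cdxu.mul (csxx.sub cszz)).add (cdzu.mul csxz)).add
      (cdxw.mul cszx)).intervalIntegrable _ _
  have hiG : IntervalIntegrable (fun z =>
      dZ w x z t * (u x z t ^ 2 / 2 + g * z) + w x z t * (u x z t * dZ u x z t + g)
        + (dZ w x z t * p x z t + w x z t * dZ p x z t)
        - (dZ u x z t * Sxz x z t + u x z t * dZ Sxz x z t)
        - (dZ w x z t * Szz x z t + w x z t * dZ Szz x z t)) volume (zb x) (η x t) :=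
    (((((cdzw.mul cE).add (cw.mul ((cu.mul cdzu).add continuous_const))).add
        ((cdzw.mul cp).add (cw.mul cdzp))).sub
      ((cdzu.mul csxz).add (cu.mul cdzsxz))).sub
      ((cdzw.mul cszz).add (cw.mul cdzszz))).intervalIntegrable _ _
  -- ====== pointwise energy identity ======
  have hP1 : ∀ z ∈ Set.Icc (zb x) (η x t),
      u x z t * dT u x z t
        + (dX u x z t * (u x z t ^ 2 / 2 + g * z + p x z t - Sxx x z t)
          + u x z t * (u x z t * dX u x z t + dX p x z t - dX Sxx x z t)
          - (dX w x z t * Szx x z t + w x z t * dX Szx x z t))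
      = -(dX u x z t * (Sxx x z t - Szz x z t) + dZ u x z t * Sxz x z t
          + dX w x z t * Szx x z t)
        - (dZ w x z t * (u x z t ^ 2 / 2 + g * z) + w x z t * (u x z t * dZ u x z t + g)
          + (dZ w x z t * p x z t + w x z t * dZ p x z t)
          - (dZ u x z t * Sxz x z t + u x z t * dZ Sxz x z t)
          - (dZ w x z t * Szz x z t + w x z t * dZ Szz x z t)) := by
    intro z hz
    have h1 := hincomp x t z hz
    have h2 := hmom x t z hz
    have h3 := hhyd x t z hz
    have e1 : dX (fun x' z' t' => (u x' z' t') ^ 2) x z t = 2 * u x z t * dX u x z t := by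
      have hh : dX (fun x' z' t' => (u x' z' t') ^ 2) x z t = _ :=
        ((EB.hasDerivAt_dX hu x z t).pow 2).deriv
      rw [hh]; norm_num
    have e2 : dZ (fun x' z' t' => u x' z' t' * w x' z' t') x z t
        = dZ u x z t * w x z t + u x z t * dZ w x z t :=
      ((EB.hasDerivAt_dZ hu x z t).mul (EB.hasDerivAt_dZ hw x z t)).deriv
    rw [e1, e2] at h2
    linear_combination (u x z t) * h2 + (w x z t) * h3
      + (g * z + p x z t - Szz x z t - u x z t ^ 2 / 2) * h1
  -- ====== integral computation ======
  have hIA : (∫ z in zb x..η x t, pd1 (fun t' z => (u x z t') ^ 2 / 2 + g * z) t z)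
      = ∫ z in zb x..η x t, u x z t * dT u x z t :=
    intervalIntegral.integral_congr fun z _ => hIEeq z
  have hIB : (∫ z in zb x..η x t,
        pd1 (fun y z => u y z t * (u y z t ^ 2 / 2 + g * z + p y z t - Sxx y z t)
          - w y z t * Szx y z t) x z)
      = ∫ z in zb x..η x t,
          (dX u x z t * (u x z t ^ 2 / 2 + g * z + p x z t - Sxx x z t)
            + u x z t * (u x z t * dX u x z t + dX p x z t - dX Sxx x z t)
            - (dX w x z t * Szx x z t + w x z t * dX Szx x z t)) :=
    intervalIntegral.integral_congr fun z _ => hEXPR z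
  have hsum : (∫ z in zb x..η x t, u x z t * dT u x z t)
      + (∫ z in zb x..η x t,
          (dX u x z t * (u x z t ^ 2 / 2 + g * z + p x z t - Sxx x z t)
            + u x z t * (u x z t * dX u x z t + dX p x z t - dX Sxx x z t)
            - (dX w x z t * Szx x z t + w x z t * dX Szx x z t)))
      = -(∫ z in zb x..η x t,
            (dX u x z t * (Sxx x z t - Szz x z t) + dZ u x z t * Sxz x z t
              + dX w x z t * Szx x z t))
        - ((w x (η x t) t * (u x (η x t) t ^ 2 / 2 + g * η x t)
              + w x (η x t) t * p x (η x t) t - u x (η x t) t * Sxz x (η x t) t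
              - w x (η x t) t * Szz x (η x t) t)
            - (w x (zb x) t * (u x (zb x) t ^ 2 / 2 + g * zb x)
              + w x (zb x) t * p x (zb x) t - u x (zb x) t * Sxz x (zb x) t
              - w x (zb x) t * Szz x (zb x) t)) := by
    rw [← intervalIntegral.integral_add hi1 hi2]
    have hc : (∫ z in zb x..η x t,
        (u x z t * dT u x z t
          + (dX u x z t * (u x z t ^ 2 / 2 + g * z + p x z t - Sxx x z t)
            + u x z t * (u x z t * dX u x z t + dX p x z t - dX Sxx x z t)
            - (dX w x z t * Szx x z t + w x z t * dX Szx x z t))))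
        = ∫ z in zb x..η x t,
          (-(dX u x z t * (Sxx x z t - Szz x z t) + dZ u x z t * Sxz x z t
              + dX w x z t * Szx x z t)
            - (dZ w x z t * (u x z t ^ 2 / 2 + g * z) + w x z t * (u x z t * dZ u x z t + g)
              + (dZ w x z t * p x z t + w x z t * dZ p x z t)
              - (dZ u x z t * Sxz x z t + u x z t * dZ Sxz x z t)
              - (dZ w x z t * Szz x z t + w x z t * dZ Szz x z t))) := by
      apply intervalIntegral.integral_congr
      intro z hz
      rw [Set.uIcc_of_le (hle x t)] at hz
      exact hP1 z hz
    have hiDneg : IntervalIntegrable (fun z =>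
        -(dX u x z t * (Sxx x z t - Szz x z t) + dZ u x z t * Sxz x z t
          + dX w x z t * Szx x z t)) volume (zb x) (η x t) := hiD.neg
    rw [hc, intervalIntegral.integral_sub hiDneg hiG, intervalIntegral.integral_neg]
    have hFTCG : (∫ z in zb x..η x t,
        (dZ w x z t * (u x z t ^ 2 / 2 + g * z) + w x z t * (u x z t * dZ u x z t + g)
          + (dZ w x z t * p x z t + w x z t * dZ p x z t)
          - (dZ u x z t * Sxz x z t + u x z t * dZ Sxz x z t)
          - (dZ w x z t * Szz x z t + w x z t * dZ Szz x z t)))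
        = (w x (η x t) t * (u x (η x t) t ^ 2 / 2 + g * η x t)
            + w x (η x t) t * p x (η x t) t - u x (η x t) t * Sxz x (η x t) t
            - w x (η x t) t * Szz x (η x t) t)
          - (w x (zb x) t * (u x (zb x) t ^ 2 / 2 + g * zb x)
            + w x (zb x) t * p x (zb x) t - u x (zb x) t * Sxz x (zb x) t
            - w x (zb x) t * Szz x (zb x) t) :=
      intervalIntegral.integral_eq_sub_of_hasDerivAt (fun z _ => hG3deriv z) hiG
    rw [hFTCG]
  -- ====== surface boundary identity ======
  have hsq : Real.sqrt (1 + (deriv (fun x' => η x' t) x) ^ 2) ≠ 0 :=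
    ne_of_gt (Real.sqrt_pos.2 (by positivity))
  have hnum1 : (-(p x (η x t) t) + Sxx x (η x t) t) * (-(deriv (fun x' => η x' t) x))
      + Sxz x (η x t) t = 0 :=
    (div_eq_zero_iff.mp (hdyn_s x t).1).resolve_right hsq
  have hnum2 : Szx x (η x t) t * (-(deriv (fun x' => η x' t) x))
      + (-(p x (η x t) t) + Szz x (η x t) t) = 0 :=
    (div_eq_zero_iff.mp (hdyn_s x t).2).resolve_right hsq
  have hbs : deriv (fun t' => η x t') t * ((u x (η x t) t) ^ 2 / 2 + g * η x t)
      + deriv (fun x' => η x' t) x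
          * (u x (η x t) t * (u x (η x t) t ^ 2 / 2 + g * η x t + p x (η x t) t
              - Sxx x (η x t) t) - w x (η x t) t * Szx x (η x t) t)
      - (w x (η x t) t * (u x (η x t) t ^ 2 / 2 + g * η x t)
          + w x (η x t) t * p x (η x t) t - u x (η x t) t * Sxz x (η x t) t
          - w x (η x t) t * Szz x (η x t) t) = 0 := by
    linear_combination (u x (η x t) t ^ 2 / 2 + g * η x t) * hkin_s x t
      + u x (η x t) t * hnum1 + w x (η x t) t * hnum2
  -- ====== bottom boundary identity ======
  have hcbpos : 0 < cb x := by rw [hcb x]; positivity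
  have hcb0 : cb x ≠ 0 := ne_of_gt hcbpos
  have hbot := hdyn_b x t
  rw [hsb x] at hbot
  have hX : Sxz x (zb x) t - deriv zb x * Sxx x (zb x) t + deriv zb x * Szz x (zb x) t
      - (deriv zb x) ^ 2 * Szx x (zb x) t = κ / cb x ^ 3 * u x (zb x) t := by
    field_simp at hbot ⊢
    linear_combination hbot
  have hbb : (w x (zb x) t * (u x (zb x) t ^ 2 / 2 + g * zb x)
        + w x (zb x) t * p x (zb x) t - u x (zb x) t * Sxz x (zb x) t
        - w x (zb x) t * Szz x (zb x) t)
      - deriv zb x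
          * (u x (zb x) t * (u x (zb x) t ^ 2 / 2 + g * zb x + p x (zb x) t
              - Sxx x (zb x) t) - w x (zb x) t * Szx x (zb x) t)
      = -(κ / cb x ^ 3 * (u x (zb x) t) ^ 2) := by
    linear_combination (-(u x (zb x) t ^ 2 / 2 + g * zb x + p x (zb x) t
        + deriv zb x * Szx x (zb x) t - Szz x (zb x) t)) * hkin_b x t
      + (-(u x (zb x) t)) * hX
  -- ====== final assembly ======
  rw [hswap, hA.deriv, hB.deriv, deriv_const, zero_mul, sub_zero, hIA, hIB]
  linarith [hsum, hbs, hbb]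
end

section
/- Let smooth functions u, w, η, with p(x,z,t) = g(η(x,t) − z), satisfy the free-surface hydrostatic Euler equations in the fluid domain: ∂_x u + ∂_z w = 0 and ∂_t u + ∂_x(u²) + ∂_z(uw) + ∂_x p = 0 for z_b(x) ≤ z ≤ η(x,t), together with the kinematic conditions ∂_t η + u_s ∂_x η − w_s = 0 at the surface and u_b ∂_x z_b − w_b = 0 at the bottom. Then the total energy is conserved: ∂/∂t ∫_{z_b}^{η} E dz + ∂/∂x ∫_{z_b}^{η} u (E + p) dz = 0, where E = u²/2 + g z. -/
open MeasureTheory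

/-- partial derivative of a smooth function of three variables, third slot -/
lemma pderiv3 {U : ℝ × ℝ × ℝ → ℝ} (hU : ContDiff ℝ (⊤ : ℕ∞) U)
    (q : ℝ × ℝ × ℝ) (v : ℝ × ℝ × ℝ) (γ : ℝ → ℝ × ℝ × ℝ) {s₀ : ℝ}
    (hγ : HasDerivAt γ v s₀) (hx : γ s₀ = q) :
    HasDerivAt (fun s => U (γ s)) (fderiv ℝ U q v) s₀ := by
  have h1 : HasFDerivAt U (fderiv ℝ U q) (γ s₀) := by
    rw [hx]; exact ((hU.differentiable (by simp)) q).hasFDerivAt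
  exact h1.comp_hasDerivAt s₀ hγ

lemma contPDeriv3 {U : ℝ × ℝ × ℝ → ℝ} (hU : ContDiff ℝ (⊤ : ℕ∞) U) (v : ℝ × ℝ × ℝ) :
    Continuous fun q => fderiv ℝ U q v :=
  (hU.continuous_fderiv (by simp)).clm_apply continuous_const

lemma lineT (t x z : ℝ) : HasDerivAt (fun s : ℝ => ((x, z, s) : ℝ × ℝ × ℝ)) ((0,0,1) : ℝ × ℝ × ℝ) t :=
  (hasDerivAt_const t x).prodMk ((hasDerivAt_const t z).prodMk (hasDerivAt_id t))

lemma lineX (t x z : ℝ) : HasDerivAt (fun s : ℝ => ((s, z, x) : ℝ × ℝ × ℝ)) ((1,0,0) : ℝ × ℝ × ℝ) t :=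
  (hasDerivAt_id t).prodMk ((hasDerivAt_const t z).prodMk (hasDerivAt_const t x))

lemma lineZ (t x z : ℝ) : HasDerivAt (fun s : ℝ => ((x, s, z) : ℝ × ℝ × ℝ)) ((0,1,0) : ℝ × ℝ × ℝ) t :=
  (hasDerivAt_const t x).prodMk ((hasDerivAt_id t).prodMk (hasDerivAt_const t z))

lemma pderiv2 {N : ℝ × ℝ → ℝ} (hN : ContDiff ℝ (⊤ : ℕ∞) N)
    (q : ℝ × ℝ) (v : ℝ × ℝ) (γ : ℝ → ℝ × ℝ) {s₀ : ℝ}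
    (hγ : HasDerivAt γ v s₀) (hx : γ s₀ = q) :
    HasDerivAt (fun s => N (γ s)) (fderiv ℝ N q v) s₀ := by
  have h1 : HasFDerivAt N (fderiv ℝ N q) (γ s₀) := by
    rw [hx]; exact ((hN.differentiable (by simp)) q).hasFDerivAt
  exact h1.comp_hasDerivAt s₀ hγ

lemma contPDeriv2 {N : ℝ × ℝ → ℝ} (hN : ContDiff ℝ (⊤ : ℕ∞) N) (v : ℝ × ℝ) :
    Continuous fun q => fderiv ℝ N q v :=
  (hN.continuous_fderiv (by simp)).clm_apply continuous_const
open MeasureTheory intervalIntegral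

lemma intInt {f : ℝ → ℝ → ℝ} (hf : Continuous fun q : ℝ × ℝ => f q.1 q.2)
    (s a b : ℝ) : IntervalIntegrable (fun z => f z s) volume a b :=
  (hf.comp (continuous_id.prodMk continuous_const)).intervalIntegrable a b

/-- moving upper endpoint -/
lemma movingEnd (f : ℝ → ℝ → ℝ)
    (hf : Continuous fun q : ℝ × ℝ => f q.1 q.2)
    {b : ℝ → ℝ} {b' s₀ : ℝ} (hb : HasDerivAt b b' s₀) :
    HasDerivAt (fun s => ∫ z in (b s₀)..(b s), f z s) (f (b s₀) s₀ * b') s₀ := by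
  set c := b s₀ with hc
  have h2 : HasDerivAt (fun s => f c s₀ * (b s - c)) (f c s₀ * b') s₀ :=
    (hb.sub_const c).const_mul (f c s₀)
  have h0 : HasDerivAt (fun s => (∫ z in c..(b s), f z s) - f c s₀ * (b s - c)) 0 s₀ := by
    rw [hasDerivAt_iff_isLittleO]
    simp only [← hc, intervalIntegral.integral_same, sub_self, mul_zero, sub_zero, smul_zero]
    rw [Asymptotics.isLittleO_iff]
    intro ε hε
    -- bound |b s - c| ≤ C |s - s₀| eventually
    obtain ⟨C, hC⟩ := hb.isBigO_sub.bound
    set C' : ℝ := max C 1 with hC'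
    have hC'pos : 0 < C' := lt_of_lt_of_le one_pos (le_max_right _ _)
    have hCev : ∀ᶠ s in nhds s₀, ‖b s - c‖ ≤ C' * ‖s - s₀‖ := by
      filter_upwards [hC] with s hs
      exact hs.trans (by gcongr; exact le_max_left _ _)
    -- continuity at (c, s₀)
    have hcont : ContinuousAt (fun q : ℝ × ℝ => f q.1 q.2) (c, s₀) := hf.continuousAt
    rw [Metric.continuousAt_iff] at hcont
    obtain ⟨δ, hδpos, hδ⟩ := hcont (ε / C') (by positivity)
    have hbev : ∀ᶠ s in nhds s₀, ‖b s - c‖ < δ := by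
      have : ContinuousAt b s₀ := hb.continuousAt
      have := this.tendsto (Metric.ball_mem_nhds c hδpos)
      filter_upwards [this] with s hs
      simpa [Real.norm_eq_abs, Real.dist_eq] using hs
    have hsev : ∀ᶠ s in nhds s₀, ‖s - s₀‖ < δ :=
      Metric.eventually_nhds_iff.2 ⟨δ, hδpos, fun {s} hs => by
        simpa [Real.norm_eq_abs, Real.dist_eq] using hs⟩
    filter_upwards [hCev, hbev, hsev] with s h1 h2 h3
    have key : (∫ z in c..(b s), f z s) - f c s₀ * (b s - c)
        = ∫ z in c..(b s), (f z s - f c s₀) := by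
      rw [intervalIntegral.integral_sub (intInt hf s c (b s))
        (intervalIntegrable_const), intervalIntegral.integral_const]
      ring_nf
    rw [key]
    have hbound : ∀ z ∈ Set.uIoc c (b s), ‖f z s - f c s₀‖ ≤ ε / C' := by
      intro z hz
      have hzc : |z - c| ≤ |b s - c| := by
        have hm := Set.uIoc_subset_uIcc hz
        rw [Set.mem_uIcc] at hm
        have habs := le_abs_self (b s - c)
        have habs' := neg_abs_le (b s - c)
        have hnn := abs_nonneg (b s - c)
        rw [abs_sub_le_iff]
        rcases hm with ⟨hm1, hm2⟩ | ⟨hm1, hm2⟩ <;> constructor <;> linarith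
      have : dist (z, s) (c, s₀) < δ := by
        rw [Prod.dist_eq]
        apply max_lt
        · rw [Real.dist_eq]; exact lt_of_le_of_lt hzc (by simpa [Real.norm_eq_abs] using h2)
        · rw [Real.dist_eq]; simpa [Real.norm_eq_abs] using h3
      exact le_of_lt (by simpa [Real.dist_eq, Real.norm_eq_abs] using hδ this)
    calc ‖∫ z in c..(b s), (f z s - f c s₀)‖
        ≤ (ε / C') * |b s - c| :=
          intervalIntegral.norm_integral_le_of_norm_le_const hbound
      _ ≤ (ε / C') * (C' * ‖s - s₀‖) := by
          apply mul_le_mul_of_nonneg_left _ (by positivity)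
          simpa [Real.norm_eq_abs] using h1
      _ = ε * ‖s - s₀‖ := by field_simp
  have := h0.add h2
  simp only [zero_add] at this
  refine this.congr_of_eventuallyEq (Filter.Eventually.of_forall fun s => ?_)
  simp only [Pi.add_apply]
  ring

lemma intInt' {f : ℝ → ℝ → ℝ} (hf : Continuous fun q : ℝ × ℝ => f q.1 q.2)
    (s a b : ℝ) : IntervalIntegrable (fun z => f z s) volume a b :=
  (hf.comp (continuous_id.prodMk continuous_const)).intervalIntegrable a b

/-- differentiation under the interval integral, fixed endpoints -/
lemma paramDeriv (f f' : ℝ → ℝ → ℝ)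
    (hf : Continuous fun q : ℝ × ℝ => f q.1 q.2)
    (hf' : Continuous fun q : ℝ × ℝ => f' q.1 q.2)
    (hd : ∀ z s, HasDerivAt (fun s' => f z s') (f' z s) s)
    (a b s₀ : ℝ) :
    HasDerivAt (fun s => ∫ z in a..b, f z s) (∫ z in a..b, f' z s₀) s₀ := by
  obtain ⟨C, hC⟩ : ∃ C, ∀ q ∈ (Set.uIcc a b) ×ˢ (Metric.closedBall s₀ 1),
      ‖f' q.1 q.2‖ ≤ C :=
    (isCompact_uIcc.prod (isCompact_closedBall s₀ 1)).exists_bound_of_continuousOn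
      hf'.continuousOn
  have key := intervalIntegral.hasDerivAt_integral_of_dominated_loc_of_deriv_le
    (F := fun s z => f z s) (F' := fun s z => f' z s) (x₀ := s₀) (a := a) (b := b)
    (bound := fun _ => C) (μ := volume) (Metric.ball_mem_nhds s₀ zero_lt_one)
    (Filter.Eventually.of_forall fun s =>
      ((hf.comp (continuous_id.prodMk continuous_const)).aestronglyMeasurable).restrict)
    (intInt' hf s₀ a b)
    (((hf'.comp (continuous_id.prodMk continuous_const)).aestronglyMeasurable).restrict)
    (Filter.Eventually.of_forall fun z hz s hs =>
      hC (z, s) ⟨Set.uIoc_subset_uIcc hz, Metric.ball_subset_closedBall hs⟩)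
    intervalIntegrable_const
    (Filter.Eventually.of_forall fun z _ s _ => hd z s)
  exact key.2

/-- full Leibniz rule: moving endpoints and parameter-dependent integrand -/
lemma leibniz (f f' : ℝ → ℝ → ℝ)
    (hf : Continuous fun q : ℝ × ℝ => f q.1 q.2)
    (hf' : Continuous fun q : ℝ × ℝ => f' q.1 q.2)
    (hd : ∀ z s, HasDerivAt (fun s' => f z s') (f' z s) s)
    {a b : ℝ → ℝ} {a' b' s₀ : ℝ}
    (ha : HasDerivAt a a' s₀) (hb : HasDerivAt b b' s₀) :
    HasDerivAt (fun s => ∫ z in (a s)..(b s), f z s)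
      (f (b s₀) s₀ * b' - f (a s₀) s₀ * a' + ∫ z in (a s₀)..(b s₀), f' z s₀) s₀ := by
  have key : ∀ s, (∫ z in (a s)..(b s), f z s)
      = (∫ z in (b s₀)..(b s), f z s) - (∫ z in (a s₀)..(a s), f z s)
        + ∫ z in (a s₀)..(b s₀), f z s := by
    intro s
    have i : ∀ p q : ℝ, IntervalIntegrable (fun z => f z s) volume p q :=
      fun p q => intInt' hf s p q
    rw [← intervalIntegral.integral_add_adjacent_intervals (i (a s) (a s₀)) (i (a s₀) (b s)),
      ← intervalIntegral.integral_add_adjacent_intervals (i (a s₀) (b s₀)) (i (b s₀) (b s)),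
      intervalIntegral.integral_symm (a s₀) (a s)]
    ring
  have hmain : HasDerivAt (fun s => (∫ z in (b s₀)..(b s), f z s)
      - (∫ z in (a s₀)..(a s), f z s) + ∫ z in (a s₀)..(b s₀), f z s)
      (f (b s₀) s₀ * b' - f (a s₀) s₀ * a' + ∫ z in (a s₀)..(b s₀), f' z s₀) s₀ :=
    ((movingEnd f hf hb).sub (movingEnd f hf ha)).add (paramDeriv f f' hf hf' hd _ _ s₀)
  exact hmain.congr_of_eventuallyEq (Filter.Eventually.of_forall key)

/-- smooth solutions of the free-surface hydrostatic Euler equations with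
`p = g(η−z)` conserve the total energy:
`∂_t ∫_{z_b}^η E dz + ∂_x ∫_{z_b}^η u(E+p) dz = 0`, where `E = u²/2 + gz`. -/
theorem stmt2 (g : ℝ) (hg : 0 < g)
    (zb : ℝ → ℝ) (H : ℝ → ℝ → ℝ)
    (hzb : ContDiff ℝ (⊤ : ℕ∞) zb)
    (hH : ContDiff ℝ (⊤ : ℕ∞) (fun q : ℝ × ℝ => H q.1 q.2))
    (hHpos : ∀ x t : ℝ, 0 < H x t)
    (η : ℝ → ℝ → ℝ) (hη : ∀ x t : ℝ, η x t = zb x + H x t)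
    (u w p : ℝ → ℝ → ℝ → ℝ)
    (hu : ContDiff ℝ (⊤ : ℕ∞) (fun q : ℝ × ℝ × ℝ => u q.1 q.2.1 q.2.2))
    (hw : ContDiff ℝ (⊤ : ℕ∞) (fun q : ℝ × ℝ × ℝ => w q.1 q.2.1 q.2.2))
    (hp : ∀ x z t : ℝ, p x z t = g * (η x t - z))
    (hincomp : ∀ x t : ℝ, ∀ z ∈ Set.Icc (zb x) (η x t),
      dX u x z t + dZ w x z t = 0)
    (hmom : ∀ x t : ℝ, ∀ z ∈ Set.Icc (zb x) (η x t),
      dT u x z t + dX (fun x' z' t' => (u x' z' t') ^ 2) x z t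
        + dZ (fun x' z' t' => u x' z' t' * w x' z' t') x z t + dX p x z t = 0)
    (hkin_s : ∀ x t : ℝ,
      deriv (fun t' => η x t') t
        + u x (η x t) t * deriv (fun x' => η x' t) x - w x (η x t) t = 0)
    (hkin_b : ∀ x t : ℝ, u x (zb x) t * deriv zb x - w x (zb x) t = 0) :
    ∀ x t : ℝ,
      deriv (fun t' => ∫ z in (zb x)..(η x t'), ((u x z t') ^ 2 / 2 + g * z)) t
        + deriv (fun x' => ∫ z in (zb x')..(η x' t),
            u x' z t * (((u x' z t) ^ 2 / 2 + g * z) + p x' z t)) x = 0 := by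
  intro x t
  -- smoothness of η
  have hN : ContDiff ℝ (⊤ : ℕ∞) (fun q : ℝ × ℝ => η q.1 q.2) := by
    have : (fun q : ℝ × ℝ => η q.1 q.2) = fun q : ℝ × ℝ => zb q.1 + H q.1 q.2 :=
      funext fun q => hη q.1 q.2
    rw [this]
    exact (hzb.comp contDiff_fst).add hH
  -- partial derivative functions
  set uT : ℝ → ℝ → ℝ → ℝ :=
    fun a b c => fderiv ℝ (fun q : ℝ × ℝ × ℝ => u q.1 q.2.1 q.2.2) (a, b, c) (0, 0, 1) with huT_def
  set uX : ℝ → ℝ → ℝ → ℝ :=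
    fun a b c => fderiv ℝ (fun q : ℝ × ℝ × ℝ => u q.1 q.2.1 q.2.2) (a, b, c) (1, 0, 0) with huX_def
  set uZ : ℝ → ℝ → ℝ → ℝ :=
    fun a b c => fderiv ℝ (fun q : ℝ × ℝ × ℝ => u q.1 q.2.1 q.2.2) (a, b, c) (0, 1, 0) with huZ_def
  set wZ : ℝ → ℝ → ℝ → ℝ :=
    fun a b c => fderiv ℝ (fun q : ℝ × ℝ × ℝ => w q.1 q.2.1 q.2.2) (a, b, c) (0, 1, 0) with hwZ_def
  set ηT : ℝ → ℝ → ℝ :=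
    fun a c => fderiv ℝ (fun q : ℝ × ℝ => η q.1 q.2) (a, c) (0, 1) with hηT_def
  set ηX : ℝ → ℝ → ℝ :=
    fun a c => fderiv ℝ (fun q : ℝ × ℝ => η q.1 q.2) (a, c) (1, 0) with hηX_def
  -- basic HasDerivAt facts
  have hUt : ∀ x' z' t', HasDerivAt (fun s => u x' z' s) (uT x' z' t') t' :=
    fun x' z' t' => pderiv3 hu (x', z', t') (0, 0, 1) _ (lineT t' x' z') rfl
  have hUx : ∀ x' z' t', HasDerivAt (fun y => u y z' t') (uX x' z' t') x' :=
    fun x' z' t' => pderiv3 hu (x', z', t') (1, 0, 0) _ (lineX x' t' z') rfl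
  have hUz : ∀ x' z' t', HasDerivAt (fun ζ => u x' ζ t') (uZ x' z' t') z' :=
    fun x' z' t' => pderiv3 hu (x', z', t') (0, 1, 0) _ (lineZ z' x' t') rfl
  have hWz : ∀ x' z' t', HasDerivAt (fun ζ => w x' ζ t') (wZ x' z' t') z' :=
    fun x' z' t' => pderiv3 hw (x', z', t') (0, 1, 0) _ (lineZ z' x' t') rfl
  have hNt : ∀ x' t', HasDerivAt (fun s => η x' s) (ηT x' t') t' :=
    fun x' t' => pderiv2 hN (x', t') (0, 1) _
      ((hasDerivAt_const t' x').prodMk (hasDerivAt_id t')) rfl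
  have hNx : ∀ x' t', HasDerivAt (fun y => η y t') (ηX x' t') x' :=
    fun x' t' => pderiv2 hN (x', t') (1, 0) _
      ((hasDerivAt_id x').prodMk (hasDerivAt_const x' t')) rfl
  -- continuity helper maps
  have m1 : Continuous fun q : ℝ × ℝ => ((x, q.1, q.2) : ℝ × ℝ × ℝ) :=
    continuous_const.prodMk (continuous_fst.prodMk continuous_snd)
  have m2 : Continuous fun q : ℝ × ℝ => ((q.2, q.1, t) : ℝ × ℝ × ℝ) :=
    continuous_snd.prodMk (continuous_fst.prodMk continuous_const)
  have m3 : Continuous fun q : ℝ × ℝ => ((q.2, t) : ℝ × ℝ) :=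
    continuous_snd.prodMk continuous_const
  have mz : Continuous fun z : ℝ => ((x, z, t) : ℝ × ℝ × ℝ) :=
    continuous_const.prodMk (continuous_id.prodMk continuous_const)
  -- continuity of things
  have cu1 : Continuous fun q : ℝ × ℝ => u x q.1 q.2 := hu.continuous.comp m1
  have cuT1 : Continuous fun q : ℝ × ℝ => uT x q.1 q.2 := (contPDeriv3 hu (0,0,1)).comp m1
  have cu2 : Continuous fun q : ℝ × ℝ => u q.2 q.1 t := hu.continuous.comp m2
  have cuX2 : Continuous fun q : ℝ × ℝ => uX q.2 q.1 t := (contPDeriv3 hu (1,0,0)).comp m2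
  have cN2 : Continuous fun q : ℝ × ℝ => η q.2 t := hN.continuous.comp m3
  have cNX2 : Continuous fun q : ℝ × ℝ => ηX q.2 t := (contPDeriv2 hN (1,0)).comp m3
  -- Part A : time derivative
  have hA : HasDerivAt
      (fun t' => ∫ z in (zb x)..(η x t'), ((u x z t') ^ 2 / 2 + g * z))
      (((u x (η x t) t) ^ 2 / 2 + g * (η x t)) * ηT x t
        - ((u x (zb x) t) ^ 2 / 2 + g * (zb x)) * 0
        + ∫ z in (zb x)..(η x t), u x z t * uT x z t) t := by
    apply leibniz (fun z s => (u x z s) ^ 2 / 2 + g * z)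
      (fun z s => u x z s * uT x z s)
      (((cu1.pow 2).div_const 2).add (continuous_const.mul continuous_fst))
      (cu1.mul cuT1)
      ?_ (hasDerivAt_const t (zb x)) (hNt x t)
    intro z s
    have h := (((hUt x z s).fun_pow 2).div_const 2).add_const (g * z)
    refine h.congr_deriv ?_
    norm_num
    ring
  -- Part B : space derivative
  have hB : HasDerivAt
      (fun x' => ∫ z in (zb x')..(η x' t),
        u x' z t * (((u x' z t) ^ 2 / 2 + g * z) + g * (η x' t - z)))
      ((u x (η x t) t * (((u x (η x t) t) ^ 2 / 2 + g * (η x t)) + g * (η x t - η x t))) * ηX x t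
        - (u x (zb x) t * (((u x (zb x) t) ^ 2 / 2 + g * (zb x)) + g * (η x t - zb x))) * deriv zb x
        + ∫ z in (zb x)..(η x t),
            uX x z t * (((u x z t) ^ 2 / 2 + g * z) + g * (η x t - z))
              + u x z t * (u x z t * uX x z t + g * ηX x t)) x := by
    apply leibniz (fun z y => u y z t * (((u y z t) ^ 2 / 2 + g * z) + g * (η y t - z)))
      (fun z y => uX y z t * (((u y z t) ^ 2 / 2 + g * z) + g * (η y t - z))
        + u y z t * (u y z t * uX y z t + g * ηX y t))
      (cu2.mul ((((cu2.pow 2).div_const 2).add (continuous_const.mul continuous_fst)).add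
        (continuous_const.mul (cN2.sub continuous_fst))))
      (cuX2.mul ((((cu2.pow 2).div_const 2).add (continuous_const.mul continuous_fst)).add
        (continuous_const.mul (cN2.sub continuous_fst))) |>.add
        (cu2.mul ((cu2.mul cuX2).add (continuous_const.mul cNX2))))
      ?_ ((hzb.differentiable (by simp) x).hasDerivAt) (hNx x t)
    intro z y
    have h1 := hUx y z t
    have hη' := hNx y t
    have inner : HasDerivAt
        (fun y' => ((u y' z t) ^ 2 / 2 + g * z) + g * (η y' t - z))
        ((2 : ℕ) * (u y z t) ^ 1 * uX y z t / 2 + g * ηX y t) y :=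
      (((h1.fun_pow 2).div_const 2).add_const (g * z)).add ((hη'.sub_const z).const_mul g)
    have h := h1.fun_mul inner
    refine h.congr_deriv ?_
    push_cast
    ring
  -- order of the bounds
  have hle : zb x ≤ η x t := by
    rw [hη]; linarith [hHpos x t]
  -- continuity in z at fixed (x,t)
  have cu : Continuous fun z => u x z t := hu.continuous.comp mz
  have cuTz : Continuous fun z => uT x z t := (contPDeriv3 hu (0,0,1)).comp mz
  have cuXz : Continuous fun z => uX x z t := (contPDeriv3 hu (1,0,0)).comp mz
  have cuZz : Continuous fun z => uZ x z t := (contPDeriv3 hu (0,1,0)).comp mz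
  have cwz : Continuous fun z => w x z t := hw.continuous.comp mz
  have cwZz : Continuous fun z => wZ x z t := (contPDeriv3 hw (0,1,0)).comp mz
  have i1 : IntervalIntegrable (fun z => u x z t * uT x z t) volume (zb x) (η x t) :=
    (cu.mul cuTz).intervalIntegrable _ _
  have c2 : Continuous fun z =>
      uX x z t * (((u x z t) ^ 2 / 2 + g * z) + g * (η x t - z))
        + u x z t * (u x z t * uX x z t + g * ηX x t) :=
    (cuXz.mul ((((cu.pow 2).div_const 2).add (continuous_const.mul continuous_id)).add
        (continuous_const.mul (continuous_const.sub continuous_id)))).add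
      (cu.mul ((cu.mul cuXz).add continuous_const))
  have i2 : IntervalIntegrable (fun z =>
      uX x z t * (((u x z t) ^ 2 / 2 + g * z) + g * (η x t - z))
        + u x z t * (u x z t * uX x z t + g * ηX x t)) volume (zb x) (η x t) :=
    c2.intervalIntegrable _ _
  -- fundamental theorem of calculus for the combined integrand
  have hFTC :
      (∫ z in (zb x)..(η x t), (u x z t * uT x z t
        + (uX x z t * (((u x z t) ^ 2 / 2 + g * z) + g * (η x t - z))
          + u x z t * (u x z t * uX x z t + g * ηX x t))))
      = -((u x (η x t) t) ^ 2 * w x (η x t) t / 2 + g * η x t * w x (η x t) t)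
        - -((u x (zb x) t) ^ 2 * w x (zb x) t / 2 + g * η x t * w x (zb x) t) := by
    apply intervalIntegral.integral_eq_sub_of_hasDerivAt
      (f := fun z => -((u x z t) ^ 2 * w x z t / 2 + g * η x t * w x z t))
    · intro z hz
      rw [Set.uIcc_of_le hle] at hz
      have hmom' := hmom x t z hz
      have hinc := hincomp x t z hz
      simp only [dX, dZ, dT] at hmom' hinc
      rw [(hUt x z t).deriv, ((hUx x z t).fun_pow 2).deriv,
        ((hUz x z t).fun_mul (hWz x z t)).deriv] at hmom'
      have hpfun : (fun x' => p x' z t) = fun x' => g * (η x' t - z) :=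
        funext fun x' => hp x' z t
      rw [hpfun, (((hNx x t).sub_const z).const_mul g).deriv] at hmom'
      rw [(hUx x z t).deriv, (hWz x z t).deriv] at hinc
      have hΨ : HasDerivAt
          (fun ζ => (u x ζ t) ^ 2 * w x ζ t / 2 + g * η x t * w x ζ t)
          (((2 : ℕ) * u x z t ^ 1 * uZ x z t * w x z t + (u x z t) ^ 2 * wZ x z t) / 2
            + g * η x t * wZ x z t) z :=
        ((((hUz x z t).fun_pow 2).fun_mul (hWz x z t)).div_const 2).add
          ((hWz x z t).const_mul (g * η x t))
      have := hΨ.neg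
      refine this.congr_deriv (Eq.symm ?_)
      push_cast at hmom' ⊢
      linear_combination u x z t * hmom' + (g * η x t - (u x z t) ^ 2 / 2) * hinc
    · exact ((cu.mul cuTz).add c2).intervalIntegrable _ _
  have key : (∫ z in (zb x)..(η x t), u x z t * uT x z t)
      + (∫ z in (zb x)..(η x t),
          uX x z t * (((u x z t) ^ 2 / 2 + g * z) + g * (η x t - z))
            + u x z t * (u x z t * uX x z t + g * ηX x t))
      = -((u x (η x t) t) ^ 2 * w x (η x t) t / 2 + g * η x t * w x (η x t) t)
        - -((u x (zb x) t) ^ 2 * w x (zb x) t / 2 + g * η x t * w x (zb x) t) := by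
    rw [← intervalIntegral.integral_add i1 i2]; exact hFTC
  -- rewritten kinematic conditions
  have hks : ηT x t + u x (η x t) t * ηX x t - w x (η x t) t = 0 := by
    have h := hkin_s x t
    rwa [(hNt x t).deriv, (hNx x t).deriv] at h
  have hkb := hkin_b x t
  -- conclude
  simp only [hp]
  rw [hA.deriv, hB.deriv]
  linear_combination key + ((u x (η x t) t) ^ 2 / 2 + g * η x t) * hks
    - ((u x (zb x) t) ^ 2 / 2 + g * η x t) * hkb
end

section
/- Define the layer pressures p_α = g( h_α/2 + Σ_{j=α+1}^N h_j ) and interface pressures p_{α+1/2} = g Σ_{j=α+1}^N h_j. Then for each α = 1,…,N the identity ∂/∂x (h_α p_α) − p_{α+1/2} ∂_x z_{α+1/2} + p_{α−1/2} ∂_x z_{α−1/2} = ∂/∂x ( (g/2) H h_α ) + g h_α ∂_x z_b holds. -/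
/-- The interface heights `z_{α+1/2}(x,t) = z_b(x) + Σ_{j=1}^α l_j H(x,t)`. -/
noncomputable def zhalf (zb : ℝ → ℝ) (H : ℝ → ℝ → ℝ) (l : ℕ → ℝ) (α : ℕ) (x t : ℝ) : ℝ :=
  zb x + ∑ j ∈ Finset.Icc 1 α, l j * H x t

/-- The layer pressure `p_α = g( h_α/2 + Σ_{j=α+1}^N h_j )`, with `h_j = l_j H`. -/
noncomputable def player (H : ℝ → ℝ → ℝ) (l : ℕ → ℝ) (g : ℝ) (N α : ℕ) (x t : ℝ) : ℝ :=
  g * (l α * H x t / 2 + ∑ j ∈ Finset.Icc (α + 1) N, l j * H x t)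

/-- The interface pressure `p_{α+1/2} = g Σ_{j=α+1}^N h_j` (index `α` means `α+1/2`). -/
noncomputable def phalf (H : ℝ → ℝ → ℝ) (l : ℕ → ℝ) (g : ℝ) (N α : ℕ) (x t : ℝ) : ℝ :=
  g * ∑ j ∈ Finset.Icc (α + 1) N, l j * H x t

/-- the identity
`∂_x(h_α p_α) − p_{α+1/2} ∂_x z_{α+1/2} + p_{α−1/2} ∂_x z_{α−1/2}
  = ∂_x( (g/2) H h_α ) + g h_α ∂_x z_b`. -/
theorem stmt6 (N : ℕ) (hN : 1 ≤ N) (l : ℕ → ℝ)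
    (hl : ∀ j ∈ Finset.Icc 1 N, 0 < l j) (hlsum : ∑ j ∈ Finset.Icc 1 N, l j = 1)
    (g : ℝ) (hg : 0 < g)
    (zb : ℝ → ℝ) (H : ℝ → ℝ → ℝ)
    (hzb : ContDiff ℝ (⊤ : ℕ∞) zb)
    (hH : ContDiff ℝ (⊤ : ℕ∞) (fun q : ℝ × ℝ => H q.1 q.2))
    (hHpos : ∀ x t : ℝ, 0 < H x t) :
    ∀ α ∈ Finset.Icc 1 N, ∀ x t : ℝ,
      deriv (fun x' => l α * H x' t * player H l g N α x' t) x
        - phalf H l g N α x t * deriv (fun x' => zhalf zb H l α x' t) x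
        + phalf H l g N (α - 1) x t * deriv (fun x' => zhalf zb H l (α - 1) x' t) x
      = deriv (fun x' => g / 2 * H x' t * (l α * H x' t)) x
        + g * (l α * H x t) * deriv zb x := by
  intro α hα x t
  obtain ⟨hα1, hαN⟩ := Finset.mem_Icc.mp hα
  have hfd : Differentiable ℝ (fun x' => H x' t) :=
    (hH.differentiable (by simp)).comp
      (differentiable_id.prodMk (differentiable_const t))
  have h1 : HasDerivAt (fun x' => H x' t) (deriv (fun x' => H x' t) x) x := (hfd x).hasDerivAt
  have h2 : HasDerivAt zb (deriv zb x) x :=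
    ((hzb.differentiable (by simp)) x).hasDerivAt
  set Hx := deriv (fun x' => H x' t) x with hHx
  set zbx := deriv zb x with hzbx
  simp only [player, phalf, zhalf]
  simp only [← Finset.sum_mul]
  set A := ∑ j ∈ Finset.Icc 1 α, l j with hA
  set B := ∑ j ∈ Finset.Icc (α+1) N, l j with hB
  set A' := ∑ j ∈ Finset.Icc 1 (α-1), l j with hA'
  set C := ∑ j ∈ Finset.Icc (α-1+1) N, l j with hCdef
  have hsub : α - 1 + 1 = α := Nat.succ_pred_eq_of_pos hα1
  have cv : ∀ b : ℕ, Finset.Icc 1 b = Finset.Ioc 0 b := fun b => Finset.Icc_add_one_left_eq_Ioc 0 b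
  have cv2 : ∀ a b : ℕ, Finset.Icc (a+1) b = Finset.Ioc a b := fun a b => Finset.Icc_add_one_left_eq_Ioc a b
  have hsingle : ∑ j ∈ Finset.Ioc (α-1) α, l j = l α := by
    have h := Nat.Ioc_succ_singleton (α-1)
    rw [hsub] at h
    rw [h, Finset.sum_singleton]
  have e2 : A + B = 1 := by
    rw [hA, hB, cv, cv2, ← hlsum, cv]
    exact Finset.sum_Ioc_consecutive _ (Nat.zero_le α) hαN
  have eC : C = l α + B := by
    rw [hCdef, hB, cv2, cv2, ← hsingle]
    exact (Finset.sum_Ioc_consecutive _ (by omega) hαN).symm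
  have eA' : A' = A - l α := by
    have h : A' + l α = A := by
      rw [hA', hA, cv, cv, ← hsingle]
      exact Finset.sum_Ioc_consecutive _ (Nat.zero_le _) (by omega)
    linarith
  have d1 : deriv (fun x' => l α * H x' t * (g * (l α * H x' t / 2 + B * H x' t))) x
      = l α * Hx * (g * (l α * H x t / 2 + B * H x t))
        + l α * H x t * (g * (l α * Hx / 2 + B * Hx)) :=
    ((h1.const_mul (l α)).mul
      ((((h1.const_mul (l α)).div_const 2).add (h1.const_mul B)).const_mul g)).deriv
  have d2 : deriv (fun x' => zb x' + A * H x' t) x = zbx + A * Hx :=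
    (h2.add (h1.const_mul A)).deriv
  have d3 : deriv (fun x' => zb x' + A' * H x' t) x = zbx + A' * Hx :=
    (h2.add (h1.const_mul A')).deriv
  have d4 : deriv (fun x' => g / 2 * H x' t * (l α * H x' t)) x
      = g / 2 * Hx * (l α * H x t) + g / 2 * H x t * (l α * Hx) :=
    ((h1.const_mul (g/2)).mul (h1.const_mul (l α))).deriv
  rw [d1, d2, d3, d4, eC, eA']
  have hB1 : B = 1 - A := by linarith
  rw [hB1]; ring
end

section
/- Let u^N(x,z,t) be the piecewise constant vertical profile equal to u_α(x,t) for z ∈ (z_{α−1/2}(x,t), z_{α+1/2}(x,t)), and define ŵ(x,z,t) = − ∂/∂x ∫_{z_b(x)}^{z} u^N(x,z′,t) dz′. Then for every layer α and every z ∈ (z_{α−1/2}, z_{α+1/2}) one has ŵ(x,z,t) = k_α(x,t) − z ∂_x u_α(x,t), where the functions k_α are recursively defined by k_1 = ∂_x(z_b u_1) and k_{α+1} = k_α + ∂_x( z_{α+1/2}(u_{α+1} − u_α) ). In particular ŵ is affine in z inside each layer and (in general) discontinuous at each interface z_{α+1/2}. -/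
open MeasureTheory

/-- The piecewise constant vertical velocity profile `u^N`, equal to `u_α(x,t)` for
`z ∈ (z_{α−1/2}, z_{α+1/2})`. -/
noncomputable def uN (zb : ℝ → ℝ) (H : ℝ → ℝ → ℝ) (l : ℕ → ℝ) (u : ℕ → ℝ → ℝ → ℝ)
    (N : ℕ) (x z t : ℝ) : ℝ :=
  ∑ α ∈ Finset.Icc 1 N,
    Set.indicator (Set.Ioo (zhalf zb H l (α - 1) x t) (zhalf zb H l α x t))
      (fun _ => u α x t) z

/-- `ŵ(x,z,t) = −∂_x ∫_{z_b(x)}^z u^N(x,z′,t) dz′`. -/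
noncomputable def what (zb : ℝ → ℝ) (H : ℝ → ℝ → ℝ) (l : ℕ → ℝ) (u : ℕ → ℝ → ℝ → ℝ)
    (N : ℕ) (x z t : ℝ) : ℝ :=
  -deriv (fun x' => ∫ z' in (zb x')..z, uN zb H l u N x' z' t) x

/-- The recursively defined functions `k_α`:
`k_1 = ∂_x(z_b u_1)` and `k_{α+1} = k_α + ∂_x(z_{α+1/2}(u_{α+1} − u_α))`. -/
noncomputable def kf (zb : ℝ → ℝ) (H : ℝ → ℝ → ℝ) (l : ℕ → ℝ) (u : ℕ → ℝ → ℝ → ℝ) :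
    ℕ → ℝ → ℝ → ℝ
  | 0, _, _ => 0
  | 1, x, t => deriv (fun x' => zb x' * u 1 x' t) x
  | α + 2, x, t => kf zb H l u (α + 1) x t
      + deriv (fun x' => zhalf zb H l (α + 1) x' t * (u (α + 2) x' t - u (α + 1) x' t)) x



lemma my_zhalf_eq (zb : ℝ → ℝ) (H : ℝ → ℝ → ℝ) (l : ℕ → ℝ) (α : ℕ) (x t : ℝ) :
    zhalf zb H l α x t = zb x + (∑ j ∈ Finset.Icc 1 α, l j) * H x t := by
  simp [zhalf, Finset.sum_mul]

lemma my_zhalf_succ (zb : ℝ → ℝ) (H : ℝ → ℝ → ℝ) (l : ℕ → ℝ) (α : ℕ) (x t : ℝ) :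
    zhalf zb H l (α + 1) x t = zhalf zb H l α x t + l (α + 1) * H x t := by
  simp only [zhalf, Finset.sum_Icc_succ_top (Nat.le_add_left 1 α)]
  ring

lemma my_ind_ii (a b c lo hi : ℝ) :
    IntervalIntegrable (Set.indicator (Set.Ioo a b) (fun _ => c)) volume lo hi := by
  rw [intervalIntegrable_iff]
  exact IntegrableOn.indicator (integrableOn_const measure_Ioc_lt_top.ne) measurableSet_Ioo

lemma my_ind_int (a b c lo z : ℝ) (h : lo ≤ z) :
    ∫ z' in lo..z, Set.indicator (Set.Ioo a b) (fun _ => c) z' =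
      (volume (Set.Ioo a b ∩ Set.Ioc lo z)).toReal * c := by
  rw [intervalIntegral.integral_of_le h, MeasureTheory.setIntegral_indicator measurableSet_Ioo,
    MeasureTheory.setIntegral_const, Set.inter_comm, smul_eq_mul]
  rfl

/-- monotonicity of interface heights -/
lemma my_zhalf_mono {N : ℕ} {l : ℕ → ℝ} (hl : ∀ j ∈ Finset.Icc 1 N, 0 < l j)
    (zb : ℝ → ℝ) (H : ℝ → ℝ → ℝ) (hHpos : ∀ x t : ℝ, 0 < H x t)
    {β γ : ℕ} (hβγ : β ≤ γ) (hγ : γ ≤ N) (x t : ℝ) :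
    zhalf zb H l β x t ≤ zhalf zb H l γ x t := by
  rw [my_zhalf_eq, my_zhalf_eq]
  have hIcc : ∀ n : ℕ, Finset.Icc 1 n = Finset.Ioc 0 n := fun n => by
    rw [← Finset.Icc_add_one_left_eq_Ioc]
    rfl
  have hsum : (∑ j ∈ Finset.Icc 1 β, l j) + ∑ j ∈ Finset.Ioc β γ, l j
      = ∑ j ∈ Finset.Icc 1 γ, l j := by
    rw [hIcc, hIcc]
    exact Finset.sum_Ioc_consecutive l (Nat.zero_le β) hβγ
  have hpos : 0 ≤ ∑ j ∈ Finset.Ioc β γ, l j := by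
    apply Finset.sum_nonneg
    intro j hj
    rcases Finset.mem_Ioc.1 hj with ⟨h1, h2⟩
    exact le_of_lt (hl j (Finset.mem_Icc.2 ⟨by omega, le_trans h2 hγ⟩))
  nlinarith [le_of_lt (hHpos x t)]

/-- the value of the integral inside layer α -/
lemma my_integ {N : ℕ} {l : ℕ → ℝ} (hl : ∀ j ∈ Finset.Icc 1 N, 0 < l j)
    (zb : ℝ → ℝ) (H : ℝ → ℝ → ℝ) (hHpos : ∀ x t : ℝ, 0 < H x t)
    (u : ℕ → ℝ → ℝ → ℝ) {α : ℕ} (hα1 : 1 ≤ α) (hαN : α ≤ N) (x t z : ℝ)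
    (hz : z ∈ Set.Ioo (zhalf zb H l (α - 1) x t) (zhalf zb H l α x t)) :
    ∫ z' in (zb x)..z, uN zb H l u N x z' t
      = (∑ β ∈ Finset.Icc 1 (α - 1), l β * (H x t * u β x t))
        + (z - zhalf zb H l (α - 1) x t) * u α x t := by
  obtain ⟨hz1, hz2⟩ := hz
  have h0 : zb x = zhalf zb H l 0 x t := by simp [zhalf]
  have hmono : ∀ ⦃β γ : ℕ⦄, β ≤ γ → γ ≤ N → zhalf zb H l β x t ≤ zhalf zb H l γ x t :=
    fun β γ h1 h2 => my_zhalf_mono hl zb H hHpos h1 h2 x t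
  have hzb_le : zb x ≤ z := by
    rw [h0]; exact le_of_lt (lt_of_le_of_lt (hmono (Nat.zero_le _) (le_trans (Nat.sub_le α 1) hαN)) hz1)
  unfold uN
  rw [intervalIntegral.integral_finset_sum (fun β _ => my_ind_ii _ _ _ _ _)]
  have hIcc : ∀ n : ℕ, Finset.Icc 1 n = Finset.Ioc 0 n := fun n => by
    rw [← Finset.Icc_add_one_left_eq_Ioc]
    rfl
  set f : ℕ → ℝ := fun β => ∫ z' in (zb x)..z,
    Set.indicator (Set.Ioo (zhalf zb H l (β - 1) x t) (zhalf zb H l β x t))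
      (fun _ => u β x t) z' with hf
  have hsplit1 : (∑ β ∈ Finset.Icc 1 N, f β)
      = (∑ β ∈ Finset.Ioc 0 α, f β) + ∑ β ∈ Finset.Ioc α N, f β := by
    rw [hIcc, Finset.sum_Ioc_consecutive f (Nat.zero_le α) hαN]
  have hα' : α = (α - 1) + 1 := (Nat.succ_pred_eq_of_pos hα1).symm
  have hsplit2 : (∑ β ∈ Finset.Ioc 0 α, f β)
      = (∑ β ∈ Finset.Ioc 0 (α - 1), f β) + f α := by
    conv_lhs => rw [hα']
    rw [Finset.sum_Ioc_succ_top (Nat.zero_le _) f, ← hα']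
  -- evaluate the lower terms
  have hlow : ∀ β ∈ Finset.Ioc 0 (α - 1), f β = l β * (H x t * u β x t) := by
    intro β hβ
    rcases Finset.mem_Ioc.1 hβ with ⟨hβ0, hβα⟩
    have hβN : β ≤ N := le_trans (le_trans hβα (Nat.sub_le α 1)) hαN
    have hsub : Set.Ioo (zhalf zb H l (β - 1) x t) (zhalf zb H l β x t) ⊆ Set.Ioc (zb x) z := by
      intro y hy
      constructor
      · calc zb x = zhalf zb H l 0 x t := h0
          _ ≤ zhalf zb H l (β - 1) x t := hmono (Nat.zero_le _) (le_trans (Nat.sub_le β 1) hβN)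
          _ < y := hy.1
      · have : zhalf zb H l β x t ≤ zhalf zb H l (α - 1) x t :=
          hmono hβα (le_trans (Nat.sub_le α 1) hαN)
        exact le_of_lt (lt_of_lt_of_le hy.2 (le_trans this (le_of_lt hz1)))
    have hle : zhalf zb H l (β - 1) x t ≤ zhalf zb H l β x t :=
      hmono (Nat.sub_le β 1) hβN
    have hlen : zhalf zb H l β x t - zhalf zb H l (β - 1) x t = l β * H x t := by
      obtain ⟨γ', rfl⟩ : ∃ γ', β = γ' + 1 := ⟨β - 1, by omega⟩
      rw [Nat.add_sub_cancel, my_zhalf_succ]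
      ring
    rw [hf]
    simp only
    rw [my_ind_int _ _ _ _ _ hzb_le, Set.inter_eq_left.2 hsub, Real.volume_Ioo,
      ENNReal.toReal_ofReal (by linarith), hlen]
    ring
  -- evaluate the top terms
  have htop : ∀ β ∈ Finset.Ioc α N, f β = 0 := by
    intro β hβ
    rcases Finset.mem_Ioc.1 hβ with ⟨hβα, hβN⟩
    have hz_le : z ≤ zhalf zb H l (β - 1) x t :=
      le_of_lt (lt_of_lt_of_le hz2 (hmono (by omega) (le_trans (Nat.sub_le β 1) hβN)))
    have hempty : Set.Ioo (zhalf zb H l (β - 1) x t) (zhalf zb H l β x t) ∩ Set.Ioc (zb x) z = ∅ := by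
      ext y
      simp only [Set.mem_inter_iff, Set.mem_Ioo, Set.mem_Ioc, Set.mem_empty_iff_false, iff_false]
      rintro ⟨⟨h1, _⟩, ⟨_, h4⟩⟩
      linarith
    rw [hf]
    simp only
    rw [my_ind_int _ _ _ _ _ hzb_le, hempty]
    simp
  -- evaluate the middle term
  have hmid : f α = (z - zhalf zb H l (α - 1) x t) * u α x t := by
    have hset : Set.Ioo (zhalf zb H l (α - 1) x t) (zhalf zb H l α x t) ∩ Set.Ioc (zb x) z
        = Set.Ioc (zhalf zb H l (α - 1) x t) z := by
      ext y
      simp only [Set.mem_inter_iff, Set.mem_Ioo, Set.mem_Ioc]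
      constructor
      · rintro ⟨⟨h1, _⟩, ⟨_, h4⟩⟩; exact ⟨h1, h4⟩
      · rintro ⟨h1, h2⟩
        have hzb0 : zb x ≤ zhalf zb H l (α - 1) x t := by
          rw [h0]; exact hmono (Nat.zero_le _) (le_trans (Nat.sub_le α 1) hαN)
        exact ⟨⟨h1, lt_of_le_of_lt h2 hz2⟩, ⟨lt_of_le_of_lt hzb0 h1, h2⟩⟩
    rw [hf]
    simp only
    rw [my_ind_int _ _ _ _ _ hzb_le, hset, Real.volume_Ioc,
      ENNReal.toReal_ofReal (by linarith)]
  rw [hsplit1, hsplit2, Finset.sum_congr rfl hlow, Finset.sum_eq_zero htop, hmid, hIcc]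
  ring

lemma my_dslice (f : ℝ → ℝ → ℝ) (hf : ContDiff ℝ (⊤ : ℕ∞) (fun q : ℝ × ℝ => f q.1 q.2)) (t : ℝ) :
    Differentiable ℝ (fun x => f x t) :=
  (hf.differentiable (by simp)).comp (differentiable_id.prodMk (differentiable_const t))

lemma my_dzh (zb : ℝ → ℝ) (H : ℝ → ℝ → ℝ) (l : ℕ → ℝ)
    (hzb : ContDiff ℝ (⊤ : ℕ∞) zb)
    (hH : ContDiff ℝ (⊤ : ℕ∞) (fun q : ℝ × ℝ => H q.1 q.2)) (α : ℕ) (t : ℝ) :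
    Differentiable ℝ (fun x' => zhalf zb H l α x' t) := by
  have : (fun x' => zhalf zb H l α x' t)
      = fun x' => zb x' + (∑ j ∈ Finset.Icc 1 α, l j) * H x' t :=
    funext fun x' => my_zhalf_eq zb H l α x' t
  rw [this]
  exact (hzb.differentiable (by simp)).add ((my_dslice H hH t).const_mul _)

lemma my_kf_eq (zb : ℝ → ℝ) (H : ℝ → ℝ → ℝ) (l : ℕ → ℝ) (u : ℕ → ℝ → ℝ → ℝ)
    (hzb : ContDiff ℝ (⊤ : ℕ∞) zb)
    (hH : ContDiff ℝ (⊤ : ℕ∞) (fun q : ℝ × ℝ => H q.1 q.2))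
    (hu : ∀ α, ContDiff ℝ (⊤ : ℕ∞) (fun q : ℝ × ℝ => u α q.1 q.2))
    {α : ℕ} (hα : 1 ≤ α) (x t : ℝ) :
    kf zb H l u α x t
      = deriv (fun x' => zhalf zb H l (α - 1) x' t * u α x' t) x
        - ∑ β ∈ Finset.Icc 1 (α - 1), deriv (fun x' => l β * (H x' t * u β x' t)) x := by
  have hdu : ∀ β, Differentiable ℝ (fun x' => u β x' t) := fun β => my_dslice _ (hu β) t
  have hdH : Differentiable ℝ (fun x' => H x' t) := my_dslice _ hH t
  have hdzh : ∀ β, Differentiable ℝ (fun x' => zhalf zb H l β x' t) :=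
    fun β => my_dzh zb H l hzb hH β t
  induction α, hα using Nat.le_induction with
  | base =>
    have h0 : (fun x' => zhalf zb H l (1 - 1) x' t * u 1 x' t)
        = fun x' => zb x' * u 1 x' t := by
      funext x'
      simp [zhalf]
    rw [h0]
    simp [kf]
  | succ n hn IH =>
    obtain ⟨m, rfl⟩ : ∃ m, n = m + 1 := ⟨n - 1, by omega⟩
    simp only [Nat.add_sub_cancel] at IH ⊢
    show kf zb H l u (m + 2) x t = _
    simp only [kf]
    rw [IH]
    have heq : (fun x' => zhalf zb H l (m + 1) x' t * (u (m + 2) x' t - u (m + 1) x' t))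
        = fun x' => zhalf zb H l (m + 1) x' t * u (m + 2) x' t
            - (zhalf zb H l m x' t * u (m + 1) x' t
              + l (m + 1) * (H x' t * u (m + 1) x' t)) := by
      funext x'
      rw [my_zhalf_succ]
      ring
    rw [heq, deriv_fun_sub (((hdzh (m+1)).fun_mul (hdu (m+2))) x)
        (((hdzh m).fun_mul (hdu (m+1)) |>.fun_add ((hdH.fun_mul (hdu (m+1))).const_mul (l (m+1)))) x),
      deriv_fun_add (((hdzh m).fun_mul (hdu (m+1))) x) (((hdH.fun_mul (hdu (m+1))).const_mul (l (m+1))) x),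
      Finset.sum_Icc_succ_top (by omega : 1 ≤ m + 1)
        (fun β => deriv (fun x' => l β * (H x' t * u β x' t)) x)]
    ring


/-- inside each layer `α`, the vertical velocity
`ŵ = −∂_x ∫_{z_b}^z u^N` is affine in `z`: `ŵ(x,z,t) = k_α(x,t) − z ∂_x u_α(x,t)`. -/
theorem stmt11 (N : ℕ) (hN : 1 ≤ N) (l : ℕ → ℝ)
    (hl : ∀ j ∈ Finset.Icc 1 N, 0 < l j) (hlsum : ∑ j ∈ Finset.Icc 1 N, l j = 1)
    (zb : ℝ → ℝ) (H : ℝ → ℝ → ℝ)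
    (hzb : ContDiff ℝ (⊤ : ℕ∞) zb)
    (hH : ContDiff ℝ (⊤ : ℕ∞) (fun q : ℝ × ℝ => H q.1 q.2))
    (hHpos : ∀ x t : ℝ, 0 < H x t)
    (u : ℕ → ℝ → ℝ → ℝ)
    (hu : ∀ α, ContDiff ℝ (⊤ : ℕ∞) (fun q : ℝ × ℝ => u α q.1 q.2)) :
    ∀ α ∈ Finset.Icc 1 N, ∀ x t : ℝ,
      ∀ z ∈ Set.Ioo (zhalf zb H l (α - 1) x t) (zhalf zb H l α x t),
        what zb H l u N x z t
          = kf zb H l u α x t - z * deriv (fun x' => u α x' t) x := by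
  intro α hα x t z hz
  obtain ⟨hα1, hαN⟩ := Finset.mem_Icc.1 hα
  have hdu : ∀ β, Differentiable ℝ (fun x' => u β x' t) := fun β => my_dslice _ (hu β) t
  have hdH : Differentiable ℝ (fun x' => H x' t) := my_dslice _ hH t
  have hdzh : ∀ β, Differentiable ℝ (fun x' => zhalf zb H l β x' t) :=
    fun β => my_dzh zb H l hzb hH β t
  have hev : (fun x' => ∫ z' in (zb x')..z, uN zb H l u N x' z' t) =ᶠ[nhds x]
      (fun x' => (∑ β ∈ Finset.Icc 1 (α - 1), l β * (H x' t * u β x' t))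
        + (z * u α x' t - zhalf zb H l (α - 1) x' t * u α x' t)) := by
    have h1 : ∀ᶠ x' in nhds x, zhalf zb H l (α - 1) x' t < z :=
      ((hdzh (α - 1)).continuous.continuousAt).eventually_lt continuousAt_const hz.1
    have h2 : ∀ᶠ x' in nhds x, z < zhalf zb H l α x' t :=
      continuousAt_const.eventually_lt ((hdzh α).continuous.continuousAt) hz.2
    filter_upwards [h1, h2] with x' hx1 hx2
    rw [my_integ hl zb H hHpos u hα1 hαN x' t z ⟨hx1, hx2⟩]
    ring
  have hdsum : DifferentiableAt ℝ
      (fun x' => ∑ β ∈ Finset.Icc 1 (α - 1), l β * (H x' t * u β x' t)) x :=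
    (Differentiable.fun_sum (fun i _ => ((hdH.mul (hdu i)).const_mul (l i)))) x
  unfold what
  rw [hev.deriv_eq,
    deriv_fun_add hdsum (((hdu α).const_mul z).fun_sub ((hdzh (α - 1)).fun_mul (hdu α)) x),
    deriv_fun_sum (fun i _ => ((hdH.fun_mul (hdu i)).const_mul (l i)) x),
    deriv_fun_sub (((hdu α).const_mul z) x) (((hdzh (α - 1)).fun_mul (hdu α)) x),
    deriv_const_mul z ((hdu α) x),
    my_kf_eq zb H l u hzb hH hu hα1 x t]
  ring
end
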